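/- arXiv:2312.16319 — 9 statements merged into one kernel-verified Lean document; each statement's English description precedes it below -/
import Mathlib

section
/- Let x, y ∈ A_5 with x of cycle type {5} (a 5-cycle) and y of cycle type {3} (a 3-cycle). Then for all g, h ∈ A_5, the subgroup of A_5 generated by g⁻¹xg and h⁻¹yh is all of A_5. -/
lemma A5_card : Nat.card (alternatingGroup (Fin 5)) = 60 := by
  have h2 : 2 * Fintype.card (alternatingGroup (Fin 5)) =
      Fintype.card (Equiv.Perm (Fin 5)) := two_mul_card_alternatingGroup
  rw [Fintype.card_perm] at h2
  simp only [Fintype.card_fin] at h2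
  have h5 : Nat.factorial 5 = 120 := rfl
  rw [Nat.card_eq_fintype_card]
  omega

lemma A5_sub_top (H : Subgroup (alternatingGroup (Fin 5)))
    (a b : alternatingGroup (Fin 5)) (ha : a ∈ H) (hb : b ∈ H)
    (ha5 : orderOf a = 5) (hb3 : orderOf b = 3) : H = ⊤ := by
  classical
  by_contra hne
  have h5 : 5 ∣ Nat.card H := by
    have := H.orderOf_dvd_natCard ha; rwa [ha5] at this
  have h3 : 3 ∣ Nat.card H := by
    have := H.orderOf_dvd_natCard hb; rwa [hb3] at this
  have h15 : 15 ∣ Nat.card H := Nat.Coprime.mul_dvd_of_dvd_of_dvd (by norm_num) h3 h5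
  have hmul : Nat.card H * H.index = 60 := by rw [Subgroup.card_mul_index, A5_card]
  have hidx : H.index ∣ 4 := by
    obtain ⟨k, hk⟩ := h15
    have : k * H.index = 4 := by
      have : 15 * (k * H.index) = 15 * 4 := by rw [← mul_assoc, ← hk, hmul]
      omega
    exact Dvd.intro_left k this
  have hidx4 : H.index ≤ 4 := Nat.le_of_dvd (by norm_num) hidx
  have hcore : H.normalCore = ⊥ := by
    rcases (IsSimpleGroup.eq_bot_or_eq_top_of_normal H.normalCore
      H.normalCore_normal) with h' | h'
    · exact h'
    · exact absurd (top_le_iff.mp (h' ▸ H.normalCore_le)) hne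
  have hinj : Function.Injective
      (MulAction.toPermHom (alternatingGroup (Fin 5)) (alternatingGroup (Fin 5) ⧸ H)) := by
    rw [← MonoidHom.ker_eq_bot_iff, ← Subgroup.normalCore_eq_ker]
    exact hcore
  have hle : Nat.card (alternatingGroup (Fin 5)) ≤
      Nat.card (Equiv.Perm (alternatingGroup (Fin 5) ⧸ H)) :=
    Nat.card_le_card_of_injective _ hinj
  have hcardQ : Nat.card (Equiv.Perm (alternatingGroup (Fin 5) ⧸ H)) = (H.index).factorial := by
    have : Fintype (alternatingGroup (Fin 5) ⧸ H) := Fintype.ofFinite _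
    rw [Nat.card_eq_fintype_card, Fintype.card_perm, ← Nat.card_eq_fintype_card]
    rfl
  rw [A5_card, hcardQ] at hle
  have : H.index.factorial ≤ Nat.factorial 4 := Nat.factorial_le hidx4
  simp [Nat.factorial] at this
  omega

/-- `A_5` is generated invariably by a `5`-cycle and a `3`-cycle. -/
theorem alternating_five_invariable_generation
    (x y : alternatingGroup (Fin 5))
    (hx : (x : Equiv.Perm (Fin 5)).cycleType = {5})
    (hy : (y : Equiv.Perm (Fin 5)).cycleType = {3}) :
    ∀ g h : alternatingGroup (Fin 5),
      Subgroup.closure {g⁻¹ * x * g, h⁻¹ * y * h} = ⊤ := by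
  intro g h
  have hxo : orderOf x = 5 := by
    rw [← Subgroup.orderOf_coe x, ← Equiv.Perm.lcm_cycleType, hx]
    simp
  have hyo : orderOf y = 3 := by
    rw [← Subgroup.orderOf_coe y, ← Equiv.Perm.lcm_cycleType, hy]
    simp
  have hxgo : orderOf (g⁻¹ * x * g) = 5 := by
    have hsc : SemiconjBy g⁻¹ x (g⁻¹ * x * g) := by
      unfold SemiconjBy; group
    rw [← hsc.orderOf_eq, hxo]
  have hygo : orderOf (h⁻¹ * y * h) = 3 := by
    have hsc : SemiconjBy h⁻¹ y (h⁻¹ * y * h) := by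
      unfold SemiconjBy; group
    rw [← hsc.orderOf_eq, hyo]
  exact A5_sub_top _ _ _ (Subgroup.subset_closure (by simp))
    (Subgroup.subset_closure (by simp)) hxgo hygo
end

section
/- Let p ≥ 5 be a prime such that p + 1 is a power of 2 (i.e., p is a Mersenne prime). Then the group G = PSL(2, p) is generated invariably by a Sylow p-subgroup and an element of order 2: there exist a Sylow p-subgroup P of G and an element x ∈ G of order 2 such that for all g, h ∈ G, the subgroup of G generated by g⁻¹Pg ∪ {h⁻¹xh} is all of G. -/
open Matrix

namespace PSLproof

variable {p : ℕ} [Fact p.Prime]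

abbrev SL2 (p : ℕ) := Matrix.SpecialLinearGroup (Fin 2) (ZMod p)

def u (c : ZMod p) : SL2 p := ⟨!![1, c; 0, 1], by simp [Matrix.det_fin_two_of]⟩

def l (c : ZMod p) : SL2 p := ⟨!![1, 0; c, 1], by simp [Matrix.det_fin_two_of]⟩


@[simp] lemma u_coe (c : ZMod p) : (u c).1 = !![1, c; 0, 1] := rfl
@[simp] lemma l_coe (c : ZMod p) : (l c).1 = !![1, 0; c, 1] := rfl

lemma u_mul (a b : ZMod p) : u a * u b = u (a + b) := by
  apply Subtype.ext
  simp [Matrix.SpecialLinearGroup.coe_mul, Matrix.mul_fin_two, add_comm]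

lemma u_zero : u (0 : ZMod p) = 1 := by
  apply Subtype.ext
  simp [Matrix.SpecialLinearGroup.coe_one, Matrix.one_fin_two]

def uhom : Multiplicative (ZMod p) →* SL2 p :=
  MonoidHom.mk' (fun c => u c.toAdd) (by intro a b; rw [u_mul]; rfl)

lemma u_pow (a : ZMod p) (n : ℕ) : (u a) ^ n = u ((n : ZMod p) * a) := by
  have : u a = uhom (Multiplicative.ofAdd a) := rfl
  rw [this, ← map_pow]
  have : (Multiplicative.ofAdd a) ^ n = Multiplicative.ofAdd ((n : ZMod p) * a) := by
    simp [← ofAdd_nsmul, nsmul_eq_mul]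
  rw [this]; rfl

lemma u_zpow (a : ZMod p) (n : ℤ) : (u a) ^ n = u ((n : ZMod p) * a) := by
  have : u a = uhom (Multiplicative.ofAdd a) := rfl
  rw [this, ← map_zpow]
  have : (Multiplicative.ofAdd a) ^ n = Multiplicative.ofAdd ((n : ZMod p) * a) := by
    simp [← ofAdd_zsmul, zsmul_eq_mul]
  rw [this]; rfl



set_option linter.unusedSectionVars false


lemma center_iff {A : SL2 p} :
    A ∈ Subgroup.center (SL2 p) ↔ A.1 = 1 ∨ A.1 = -1 := by
  rw [Matrix.SpecialLinearGroup.mem_center_iff]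
  constructor
  · rintro ⟨r, hr, hrA⟩
    simp only [Fintype.card_fin] at hr
    have hr2 : (r - 1) * (r + 1) = 0 := by linear_combination hr
    rcases mul_eq_zero.1 hr2 with h | h
    · left; rw [← hrA, show r = 1 by linear_combination h, _root_.map_one]
    · right; rw [← hrA, show r = -1 by linear_combination h, map_neg, _root_.map_one]
  · rintro (h | h)
    · exact ⟨1, by norm_num, by rw [_root_.map_one, h]⟩
    · exact ⟨-1, by norm_num, by rw [map_neg, _root_.map_one, h]⟩

variable (p) in
def π : SL2 p →* (SL2 p ⧸ Subgroup.center (SL2 p)) :=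
  QuotientGroup.mk' (Subgroup.center (SL2 p))

lemma π_surjective : Function.Surjective (π p) := QuotientGroup.mk'_surjective _

lemma π_eq_one_iff {A : SL2 p} : π p A = 1 ↔ (A.1 = 1 ∨ A.1 = -1) := by
  rw [← MonoidHom.mem_ker, π, QuotientGroup.ker_mk']
  exact center_iff

lemma π_eq_iff {A B : SL2 p} (h : π p A = π p B) : A.1 = B.1 ∨ A.1 = -B.1 := by
  have h1 : π p (B⁻¹ * A) = 1 := by rw [_root_.map_mul, h, _root_.map_inv, inv_mul_cancel]
  have h2 : (B⁻¹ * A).1 = 1 ∨ (B⁻¹ * A).1 = -1 := π_eq_one_iff.1 h1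
  have hB : B.1 * (B⁻¹).1 = 1 := by
    rw [← Matrix.SpecialLinearGroup.coe_mul, mul_inv_cancel,
      Matrix.SpecialLinearGroup.coe_one]
  rcases h2 with h2 | h2
  · left
    calc A.1 = B.1 * ((B⁻¹).1 * A.1) := by rw [← mul_assoc, hB, one_mul]
    _ = B.1 := by rw [← Matrix.SpecialLinearGroup.coe_mul, h2, mul_one]
  · right
    calc A.1 = B.1 * ((B⁻¹).1 * A.1) := by rw [← mul_assoc, hB, one_mul]
    _ = -B.1 := by rw [← Matrix.SpecialLinearGroup.coe_mul, h2, mul_neg, mul_one]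

lemma two_ne_zero' (h5 : 5 ≤ p) : (2 : ZMod p) ≠ 0 := by
  have : ((2 : ℕ) : ZMod p) ≠ 0 := by
    rw [Ne, ZMod.natCast_eq_zero_iff]
    intro hdvd
    have := Nat.le_of_dvd (by norm_num) hdvd
    omega
  simpa using this

lemma u_one_ne_one : π p (u 1) ≠ 1 := by
  intro hone
  rcases π_eq_one_iff.1 hone with h | h
  · have := congrFun (congrFun h 0) 1
    simp [u] at this
  · have := congrFun (congrFun h 0) 1
    simp [u] at this





lemma u_one_pow_p : (u (1 : ZMod p)) ^ p = 1 := by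
  rw [u_pow]
  simp [ZMod.natCast_self, u_zero]

lemma orderOf_u_one : orderOf (π p (u 1)) = p := by
  have hp : (π p (u 1)) ^ p = 1 := by rw [← map_pow, u_one_pow_p, _root_.map_one]
  exact orderOf_eq_prime hp u_one_ne_one

variable (p) in
def w : SL2 p := ⟨!![0, 1; -1, 0], by simp [Matrix.det_fin_two_of]⟩

lemma w_ne_one : π p (w p) ≠ 1 := by
  intro hone
  rcases π_eq_one_iff.1 hone with h | h
  · have := congrFun (congrFun h 0) 1
    simp [w] at this
  · have := congrFun (congrFun h 0) 1
    simp [w] at this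

lemma orderOf_w : orderOf (π p (w p)) = 2 := by
  have hsq : (π p (w p)) ^ 2 = 1 := by
    rw [← map_pow, π_eq_one_iff]
    right
    show ((w p) ^ 2).1 = -1
    rw [Matrix.SpecialLinearGroup.coe_pow]
    show (!![0, 1; -1, 0] : Matrix (Fin 2) (Fin 2) (ZMod p)) ^ 2 = -1
    rw [sq, Matrix.mul_fin_two]
    norm_num
    ext i j
    fin_cases i <;> fin_cases j <;> simp [Matrix.one_fin_two]
  exact orderOf_eq_prime hsq w_ne_one

variable (p) in
def P : Subgroup (SL2 p ⧸ Subgroup.center (SL2 p)) := Subgroup.zpowers (π p (u 1))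

lemma card_P : Nat.card (P p) = p := by
  rw [P, Nat.card_zpowers, orderOf_u_one]

lemma isPGroup_P : IsPGroup p (P p) :=
  IsPGroup.of_card (by rw [card_P, pow_one])

lemma val_cast (c : ZMod p) : ((c.val : ZMod p)) = c := by
  simp [ZMod.natCast_val, ZMod.cast_id]

lemma u_mem_P (c : ZMod p) : π p (u c) ∈ P p := by
  refine ⟨(c.val : ℤ), ?_⟩
  show (π p (u 1)) ^ ((c.val : ℕ) : ℤ) = π p (u c)
  rw [← map_zpow, u_zpow]
  norm_num [val_cast]

lemma card_SL_dvd : Nat.card (SL2 p) ∣ Nat.card (GL (Fin 2) (ZMod p)) := by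
  apply Subgroup.card_dvd_of_injective Matrix.SpecialLinearGroup.toGL
  intro A B h
  exact Subtype.ext (congrArg Units.val h)

lemma coprime_index_P : Nat.Coprime (P p).index p := by
  rw [Nat.coprime_comm]
  rw [(Fact.out : p.Prime).coprime_iff_not_dvd]
  intro hdvd
  have hmul : Nat.card (P p) * (P p).index = Nat.card (SL2 p ⧸ Subgroup.center (SL2 p)) :=
    Subgroup.card_mul_index _
  have h1 : p * p ∣ Nat.card (SL2 p ⧸ Subgroup.center (SL2 p)) := by
    rw [← hmul, card_P]
    exact mul_dvd_mul_left p hdvd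
  have h2 : Nat.card (SL2 p ⧸ Subgroup.center (SL2 p)) ∣ Nat.card (SL2 p) := by
    rw [Subgroup.card_eq_card_quotient_mul_card_subgroup (Subgroup.center (SL2 p))]
    exact dvd_mul_right _ _
  have h3 : p * p ∣ Nat.card (GL (Fin 2) (ZMod p)) :=
    h1.trans (h2.trans card_SL_dvd)
  have hGL : Nat.card (GL (Fin 2) (ZMod p)) = (p ^ 2 - p ^ 0) * (p ^ 2 - p ^ 1) := by
    rw [Matrix.card_GL_field]
    simp [Fin.prod_univ_two, ZMod.card]
  rw [hGL] at h3
  have hp2 : 2 ≤ p := (Fact.out : p.Prime).two_le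
  have hcop : Nat.Coprime p (p ^ 2 - p ^ 0) := by
    rw [(Fact.out : p.Prime).coprime_iff_not_dvd]
    intro hd
    have h4 : p ∣ p ^ 2 := dvd_pow_self p (by norm_num)
    have h5 : p ∣ p ^ 2 - (p ^ 2 - p ^ 0) := Nat.dvd_sub h4 hd
    have h6 : p ^ 2 - (p ^ 2 - p ^ 0) = 1 := by
      have h1' : 1 ≤ p ^ 2 := Nat.one_le_pow _ _ (by omega)
      simp only [pow_zero]
      omega
    rw [h6] at h5
    exact Nat.Prime.one_lt (Fact.out) |>.ne' (Nat.dvd_one.1 h5)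
  have hcop2 : Nat.Coprime (p * p) (p ^ 2 - p ^ 0) := Nat.Coprime.mul hcop hcop
  have h7 : p * p ∣ (p ^ 2 - p ^ 1) := (Nat.Coprime.dvd_of_dvd_mul_left hcop2 h3)
  have h8 : p ^ 2 - p ^ 1 = p * (p - 1) := by
    rw [pow_two, pow_one, Nat.mul_sub, mul_one]
  rw [h8] at h7
  have h9 : p ∣ p - 1 := (Nat.mul_dvd_mul_iff_left (by omega : 0 < p)).1 h7
  have := Nat.le_of_dvd (by omega) h9
  omega

lemma det_entries (M : SL2 p) : M.1 0 0 * M.1 1 1 - M.1 0 1 * M.1 1 0 = 1 := by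
  rw [← Matrix.det_fin_two]; exact M.2

lemma gen_lower (K : Subgroup (SL2 p)) (hu : ∀ c, u c ∈ K) (hl : ∀ c, l c ∈ K)
    (M : SL2 p) (hc : M.1 1 0 ≠ 0) : M ∈ K := by
  have hdet := det_entries M
  have key : M = u ((M.1 0 0 - 1) / M.1 1 0) * l (M.1 1 0) * u ((M.1 1 1 - 1) / M.1 1 0) := by
    apply Subtype.ext
    rw [Matrix.SpecialLinearGroup.coe_mul, Matrix.SpecialLinearGroup.coe_mul,
      u_coe, l_coe, u_coe, Matrix.mul_fin_two, Matrix.mul_fin_two]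
    rw [Matrix.eta_fin_two M.1]
    ext i j
    fin_cases i <;> fin_cases j <;>
      simp only [Matrix.cons_val_zero, Matrix.cons_val_one, Matrix.head_cons,
        Matrix.of_apply, Matrix.cons_val', Matrix.empty_val', Matrix.cons_val_fin_one,
        Matrix.head_fin_const, Fin.zero_eta, Fin.mk_one] <;>
      field_simp
    all_goals try ring
    all_goals try linear_combination -hdet
  rw [key]
  exact mul_mem (mul_mem (hu _) (hl _)) (hu _)

lemma gen_top (K : Subgroup (SL2 p)) (hu : ∀ c, u c ∈ K) (hl : ∀ c, l c ∈ K) :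
    K = ⊤ := by
  ext M
  simp only [Subgroup.mem_top, iff_true]
  by_cases hc : M.1 1 0 = 0
  · have hdet := det_entries M
    have hd : M.1 1 1 ≠ 0 := by
      intro h0
      rw [hc, h0] at hdet
      simp at hdet
    have hN : (M * l 1).1 1 0 ≠ 0 := by
      rw [Matrix.SpecialLinearGroup.coe_mul, l_coe]
      simp [Matrix.mul_apply, Fin.sum_univ_two, hc, hd]
    have hMl : M * l 1 ∈ K := gen_lower K hu hl _ hN
    have hM : M = (M * l 1) * (l 1)⁻¹ := by group
    rw [hM]
    exact mul_mem hMl (inv_mem (hl 1))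
  · exact gen_lower K hu hl M hc

variable (p) in
def Usub : Subgroup (SL2 p) := Subgroup.zpowers (u 1)

lemma u_mem_Usub (c : ZMod p) : u c ∈ Usub p := by
  refine ⟨(c.val : ℤ), ?_⟩
  show (u (1 : ZMod p)) ^ ((c.val : ℕ) : ℤ) = u c
  rw [u_zpow]
  norm_num [val_cast]

lemma closure_U_conj (C : SL2 p)
    (hne : (Usub p).map (MulAut.conj C).toMonoidHom ≠ Usub p) :
    Subgroup.closure ((Usub p : Set (SL2 p)) ∪
      ((Usub p).map (MulAut.conj C).toMonoidHom : Set (SL2 p))) = ⊤ := by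
  set K := Subgroup.closure ((Usub p : Set (SL2 p)) ∪
      ((Usub p).map (MulAut.conj C).toMonoidHom : Set (SL2 p))) with hK
  have hu : ∀ c : ZMod p, u c ∈ K :=
    fun c => Subgroup.subset_closure (Or.inl (u_mem_Usub c))
  obtain ⟨t, htdef⟩ : ∃ t : SL2 p, t = C * u 1 * C⁻¹ := ⟨_, rfl⟩
  have ht : t ∈ K := by
    apply Subgroup.subset_closure
    right
    exact ⟨u 1, u_mem_Usub 1, htdef.symm⟩
  have hdet : t.1 0 0 * t.1 1 1 - t.1 0 1 * t.1 1 0 = 1 := det_entries t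
  have htr : t.1 0 0 + t.1 1 1 = 2 := by
    have h1 : t.1 = C.1 * (u 1).1 * (C⁻¹).1 := by
      rw [htdef, Matrix.SpecialLinearGroup.coe_mul, Matrix.SpecialLinearGroup.coe_mul]
    have h2 : (C⁻¹).1 * C.1 = 1 := by
      rw [← Matrix.SpecialLinearGroup.coe_mul, inv_mul_cancel,
        Matrix.SpecialLinearGroup.coe_one]
    have h3 : Matrix.trace t.1 = Matrix.trace ((u (1 : ZMod p)).1) := by
      rw [h1, Matrix.trace_mul_cycle, h2, one_mul]
    rw [Matrix.trace_fin_two, Matrix.trace_fin_two] at h3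
    rw [show (2 : ZMod p) = 1 + 1 by norm_num]
    simpa [u] using h3
  by_cases hc : t.1 1 0 = 0
  · exfalso
    apply hne
    have ha : t.1 0 0 = 1 := by
      rw [hc] at hdet
      have h1 : (t.1 0 0 - 1) ^ 2 = 0 := by linear_combination t.1 0 0 * htr - hdet
      have h2 := pow_eq_zero_iff (two_ne_zero) |>.1 h1
      exact sub_eq_zero.1 h2
    have hd : t.1 1 1 = 1 := by linear_combination htr - ha
    have hteq : t = u (t.1 0 1) := by
      apply Subtype.ext
      rw [u_coe]
      conv_lhs => rw [Matrix.eta_fin_two t.1]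
      rw [ha, hd, hc]
    have hb : t.1 0 1 ≠ 0 := by
      intro hb0
      have ht1 : t = 1 := by
        apply Subtype.ext
        rw [hteq, hb0]
        show (u (0:ZMod p)).1 = _
        rw [u_zero]
      have hu1 : u (1 : ZMod p) = 1 := by
        apply (MulAut.conj C).injective
        rw [_root_.map_one, MulAut.conj_apply]
        exact htdef.symm.trans ht1
      have := congrFun (congrFun (congrArg Subtype.val hu1) 0) 1
      simp [u, Matrix.one_fin_two] at this
    have hmap : (Usub p).map (MulAut.conj C).toMonoidHom = Subgroup.zpowers t := by
      rw [Usub, MonoidHom.map_zpowers]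
      exact congrArg Subgroup.zpowers htdef.symm
    rw [hmap, hteq]
    apply le_antisymm
    · rw [Subgroup.zpowers_le]
      exact u_mem_Usub _
    · rw [Usub, Subgroup.zpowers_le]
      refine ⟨(((t.1 0 1)⁻¹).val : ℤ), ?_⟩
      show (u (t.1 0 1)) ^ ((((t.1 0 1)⁻¹).val : ℕ) : ℤ) = u 1
      rw [u_zpow]
      congr 1
      push_cast
      rw [val_cast, inv_mul_cancel₀ hb]
  · -- t.1 1 0 ≠ 0
    have hlc : l (t.1 1 0) ∈ K := by
      have key : l (t.1 1 0) = u ((1 - t.1 0 0) / t.1 1 0) * t * u ((1 - t.1 1 1) / t.1 1 0) := by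
        apply Subtype.ext
        rw [Matrix.SpecialLinearGroup.coe_mul, Matrix.SpecialLinearGroup.coe_mul,
          u_coe, l_coe, u_coe, Matrix.eta_fin_two t.1, Matrix.mul_fin_two, Matrix.mul_fin_two]
        ext i j
        fin_cases i <;> fin_cases j <;>
          simp only [Matrix.cons_val_zero, Matrix.cons_val_one, Matrix.head_cons,
            Matrix.of_apply, Matrix.cons_val', Matrix.empty_val', Matrix.cons_val_fin_one,
            Matrix.head_fin_const, Fin.zero_eta, Fin.mk_one] <;>
          field_simp
        all_goals try ring
        all_goals try linear_combination hdet
        all_goals try linear_combination -hdet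
        all_goals try linear_combination htr
        all_goals try linear_combination -hdet + (1 - t.1 1 1) * htr
        all_goals try linear_combination hdet + (1 - t.1 0 0) * htr
        all_goals try linear_combination -htr
      rw [key]
      exact mul_mem (mul_mem (hu _) ht) (hu _)
    obtain ⟨c0, hc0⟩ : ∃ c0 : ZMod p, c0 = t.1 1 0 := ⟨_, rfl⟩
    rw [← hc0] at hdet hc hlc
    obtain ⟨w', hw'def⟩ : ∃ w' : SL2 p, w' = u (-c0⁻¹) * l c0 * u (-c0⁻¹) := ⟨_, rfl⟩
    have hw'mem : w' ∈ K := by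
      rw [hw'def]
      exact mul_mem (mul_mem (hu _) hlc) (hu _)
    have hw'c : w'.1 = !![0, -c0⁻¹; c0, 0] := by
      rw [hw'def, Matrix.SpecialLinearGroup.coe_mul, Matrix.SpecialLinearGroup.coe_mul,
        u_coe, l_coe, Matrix.mul_fin_two, Matrix.mul_fin_two]
      ext i j
      fin_cases i <;> fin_cases j <;>
        simp only [Matrix.cons_val_zero, Matrix.cons_val_one, Matrix.head_cons,
          Matrix.of_apply, Matrix.cons_val', Matrix.empty_val', Matrix.cons_val_fin_one,
          Matrix.head_fin_const] <;>
        field_simp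
      all_goals try ring
    have hinv : (w'⁻¹).1 = !![0, c0⁻¹; -c0, 0] := by
      rw [Matrix.SpecialLinearGroup.SL2_inv_expl w']
      show !![w'.1 1 1, -w'.1 0 1; -w'.1 1 0, w'.1 0 0] = _
      rw [hw'c]
      norm_num
    have hlall : ∀ z : ZMod p, l z ∈ K := by
      intro z
      have key : l z = w' * u (-z / (c0 * c0)) * w'⁻¹ := by
        apply Subtype.ext
        rw [Matrix.SpecialLinearGroup.coe_mul, Matrix.SpecialLinearGroup.coe_mul,
          u_coe, l_coe, hw'c, hinv, Matrix.mul_fin_two, Matrix.mul_fin_two]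
        ext i j
        fin_cases i <;> fin_cases j <;>
          simp only [Matrix.cons_val_zero, Matrix.cons_val_one, Matrix.head_cons,
            Matrix.of_apply, Matrix.cons_val', Matrix.empty_val', Matrix.cons_val_fin_one,
            Matrix.head_fin_const, Fin.zero_eta, Fin.mk_one] <;>
          field_simp
        all_goals try ring
      rw [key]
      exact mul_mem (mul_mem hw'mem (hu _)) (inv_mem hw'mem)
    exact gen_top K hu hlall

lemma P_eq_map : P p = (Usub p).map (π p) := by
  rw [P, Usub, MonoidHom.map_zpowers]

lemma conj_P_eq (C : SL2 p) :
    (P p).map (MulAut.conj (π p C)).toMonoidHom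
      = ((Usub p).map (MulAut.conj C).toMonoidHom).map (π p) := by
  rw [P, Usub, MonoidHom.map_zpowers, MonoidHom.map_zpowers, MonoidHom.map_zpowers]
  apply congrArg Subgroup.zpowers
  show π p C * π p (u 1) * (π p C)⁻¹ = π p (C * u 1 * C⁻¹)
  rw [_root_.map_mul, _root_.map_mul, _root_.map_inv]

lemma dist_lemma (c : SL2 p ⧸ Subgroup.center (SL2 p))
    (hne : (P p).map (MulAut.conj c).toMonoidHom ≠ P p)
    (H : Subgroup (SL2 p ⧸ Subgroup.center (SL2 p)))
    (hP : P p ≤ H)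
    (hPc : (P p).map (MulAut.conj c).toMonoidHom ≤ H) : H = ⊤ := by
  obtain ⟨C, rfl⟩ := π_surjective c
  have hVne : (Usub p).map (MulAut.conj C).toMonoidHom ≠ Usub p := by
    intro heq
    apply hne
    rw [conj_P_eq, heq, ← P_eq_map]
  have h1 : (Usub p : Set (SL2 p)) ⊆ (H.comap (π p) : Set (SL2 p)) := by
    intro s hs
    have hmem : π p s ∈ (Usub p).map (π p) := ⟨s, hs, rfl⟩
    rw [← P_eq_map] at hmem
    exact hP hmem
  have h2 : ((Usub p).map (MulAut.conj C).toMonoidHom : Set (SL2 p)) ⊆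
      (H.comap (π p) : Set (SL2 p)) := by
    intro s hs
    have hmem : π p s ∈ ((Usub p).map (MulAut.conj C).toMonoidHom).map (π p) := ⟨s, hs, rfl⟩
    rw [← conj_P_eq] at hmem
    exact hPc hmem
  have htop : H.comap (π p) = ⊤ := by
    have hle := (Subgroup.closure_le (H.comap (π p))).2 (Set.union_subset h1 h2)
    rw [closure_U_conj C hVne] at hle
    exact top_le_iff.1 hle
  have := Subgroup.map_comap_eq_self_of_surjective π_surjective H
  rw [← this, htop]
  exact Subgroup.map_top_of_surjective _ π_surjective

lemma conj_u_entry (A : SL2 p) :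
    (A * u 1 * A⁻¹).1 1 0 = -(A.1 1 0 * A.1 1 0) := by
  have hinv : (A⁻¹).1 = !![A.1 1 1, -A.1 0 1; -A.1 1 0, A.1 0 0] :=
    congrArg Subtype.val (Matrix.SpecialLinearGroup.SL2_inv_expl A)
  rw [Matrix.SpecialLinearGroup.coe_mul, Matrix.SpecialLinearGroup.coe_mul, u_coe, hinv]
  rw [Matrix.eta_fin_two A.1, Matrix.mul_fin_two, Matrix.mul_fin_two]
  simp
  ring

lemma no_involution_normalizer (hp4 : p % 4 = 3) (h5 : 5 ≤ p)
    (y : SL2 p ⧸ Subgroup.center (SL2 p))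
    (hy : y ∈ Subgroup.normalizer (P p : Set (SL2 p ⧸ Subgroup.center (SL2 p)))) (hy2 : y ^ 2 = 1) : y = 1 := by
  obtain ⟨A, rfl⟩ := π_surjective y
  have hmem : π p A * π p (u 1) * (π p A)⁻¹ ∈ P p :=
    (Subgroup.mem_normalizer_iff.1 hy (π p (u 1))).1 (Subgroup.mem_zpowers _)
  obtain ⟨n, hn⟩ := hmem
  have hn2 : (π p (u (1 : ZMod p))) ^ n = π p (A * u 1 * A⁻¹) := by
    have h' : (π p (u (1 : ZMod p))) ^ n = π p A * π p (u 1) * (π p A)⁻¹ := hn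
    rw [h', _root_.map_mul, _root_.map_mul, _root_.map_inv]
  have hn' : π p (u ((n : ZMod p) * 1)) = π p (A * u 1 * A⁻¹) := by
    rw [← u_zpow, map_zpow, hn2]
  have hcases := π_eq_iff hn'
  have hc : A.1 1 0 = 0 := by
    have hent := conj_u_entry A
    rcases hcases with h | h
    · have := congrFun (congrFun h 1) 0
      rw [hent] at this
      simp [u] at this
      exact this
    · have := congrFun (congrFun h 1) 0
      rw [Matrix.neg_apply, hent] at this
      simp [u] at this
      exact this
  -- A is upper triangular
  have hdet := det_entries A
  rw [hc, mul_zero, sub_zero] at hdet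
  have hA2 : π p (A ^ 2) = 1 := by rw [map_pow]; exact hy2
  rcases π_eq_one_iff.1 hA2 with h2 | h2
  case _ =>
    -- A^2 = 1 case
    have hsq : A.1 * A.1 = 1 := by
      rw [← Matrix.SpecialLinearGroup.coe_mul, ← sq]; exact h2
    have ha2 : A.1 0 0 * A.1 0 0 = 1 := by
      have := congrFun (congrFun hsq 0) 0
      rw [Matrix.mul_apply, Fin.sum_univ_two, hc] at this
      simpa [Matrix.one_apply] using this
    have hb0 : A.1 0 1 * (A.1 0 0 + A.1 1 1) = 0 := by
      have := congrFun (congrFun hsq 0) 1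
      rw [Matrix.mul_apply, Fin.sum_univ_two] at this
      simp [Matrix.one_apply] at this
      linear_combination this
    rcases mul_self_eq_one_iff.1 ha2 with ha | ha
    · have hd : A.1 1 1 = 1 := by
        rw [ha, one_mul] at hdet; exact hdet
      have hb : A.1 0 1 = 0 := by
        rw [ha, hd] at hb0
        rcases mul_eq_zero.1 hb0 with h | h
        · exact h
        · exact absurd (by linear_combination h) (two_ne_zero' h5)
      rw [π_eq_one_iff]
      left
      rw [Matrix.eta_fin_two A.1, ha, hb, hc, hd, Matrix.one_fin_two]
    · have hd : A.1 1 1 = -1 := by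
        rw [ha] at hdet; linear_combination -hdet
      have hb : A.1 0 1 = 0 := by
        rw [ha, hd] at hb0
        rcases mul_eq_zero.1 hb0 with h | h
        · exact h
        · exact absurd (by linear_combination -h) (two_ne_zero' h5)
      rw [π_eq_one_iff]
      right
      rw [Matrix.eta_fin_two A.1, ha, hb, hc, hd]
      rw [Matrix.one_fin_two]
      norm_num
  case _ =>
    -- A^2 = -1 case: contradiction with p % 4 = 3
    exfalso
    have hsq : A.1 * A.1 = -1 := by
      rw [← Matrix.SpecialLinearGroup.coe_mul, ← sq]; exact h2
    have ha2 : A.1 0 0 * A.1 0 0 = -1 := by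
      have := congrFun (congrFun hsq 0) 0
      rw [Matrix.mul_apply, Fin.sum_univ_two, hc] at this
      simpa [Matrix.one_apply] using this
    have : IsSquare (-1 : ZMod p) := ⟨A.1 0 0, by linear_combination -ha2⟩
    rw [ZMod.exists_sq_eq_neg_one_iff] at this
    exact this hp4

lemma core_lemma (hp4 : p % 4 = 3) (h5 : 5 ≤ p)
    (H : Subgroup (SL2 p ⧸ Subgroup.center (SL2 p)))
    (hP : P p ≤ H) (q : SL2 p ⧸ Subgroup.center (SL2 p))
    (hqH : q ∈ H) (hq : orderOf q = 2) : H = ⊤ := by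
  by_cases hnorm : H ≤ Subgroup.normalizer (P p : Set (SL2 p ⧸ Subgroup.center (SL2 p)))
  · exfalso
    have h1 : q ^ 2 = 1 := orderOf_dvd_iff_pow_eq_one.1 (by rw [hq])
    have h2 := no_involution_normalizer hp4 h5 q (hnorm hqH) h1
    rw [h2, orderOf_one] at hq
    norm_num at hq
  · rw [SetLike.le_def] at hnorm
    push_neg at hnorm
    obtain ⟨k, hkH, hknot⟩ := hnorm
    have hne : (P p).map (MulAut.conj k).toMonoidHom ≠ P p := by
      intro heq
      apply hknot
      rw [Subgroup.mem_normalizer_iff]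
      intro n
      constructor
      · intro hn
        have : (MulAut.conj k) n ∈ (P p).map (MulAut.conj k).toMonoidHom := ⟨n, hn, rfl⟩
        rw [heq] at this
        exact this
      · intro hn
        have : k * n * k⁻¹ ∈ (P p).map (MulAut.conj k).toMonoidHom := heq.symm ▸ hn
        obtain ⟨m, hm, hmeq⟩ := this
        have : m = n := by
          apply (MulAut.conj k).injective
          exact hmeq
        rw [← this]
        exact hm
    have hPk : (P p).map (MulAut.conj k).toMonoidHom ≤ H := by
      rintro _ ⟨m, hm, rfl⟩
      show k * m * k⁻¹ ∈ H
      exact mul_mem (mul_mem hkH (hP hm)) (inv_mem hkH)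
    exact dist_lemma k hne H hP hPk

end PSLproof

/-- For a Mersenne prime `p ≥ 5`, the group `PSL(2, p)` is generated invariably by a
Sylow `p`-subgroup and an element of order two. -/
theorem PSL2_mersenne_invariable_generation
    (p : ℕ) (hp : p.Prime) (h5 : 5 ≤ p) (hmersenne : ∃ k : ℕ, p + 1 = 2 ^ k) :
    ∃ P : Subgroup (Matrix.SpecialLinearGroup (Fin 2) (ZMod p) ⧸
        Subgroup.center (Matrix.SpecialLinearGroup (Fin 2) (ZMod p))),
      IsPGroup p P ∧ Nat.Coprime P.index p ∧
      ∃ x : Matrix.SpecialLinearGroup (Fin 2) (ZMod p) ⧸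
          Subgroup.center (Matrix.SpecialLinearGroup (Fin 2) (ZMod p)),
        orderOf x = 2 ∧
        ∀ g h : Matrix.SpecialLinearGroup (Fin 2) (ZMod p) ⧸
            Subgroup.center (Matrix.SpecialLinearGroup (Fin 2) (ZMod p)),
          Subgroup.closure
            ({z | ∃ a ∈ P, z = g⁻¹ * a * g} ∪ {h⁻¹ * x * h}) = ⊤ := by
  haveI : Fact p.Prime := ⟨hp⟩
  have hp4 : p % 4 = 3 := by
    obtain ⟨k, hk⟩ := hmersenne
    have hk6 : 6 ≤ 2 ^ k := by omega
    have hk3 : 2 < k := by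
      have := (Nat.pow_lt_pow_iff_right (by norm_num : 1 < 2)).1
        (show 2 ^ 2 < 2 ^ k by omega)
      omega
    have h8 : 2 ^ k = 8 * 2 ^ (k - 3) := by
      rw [show (8 : ℕ) = 2 ^ 3 from rfl, ← pow_add]
      congr 1
      omega
    omega
  refine ⟨PSLproof.P p, PSLproof.isPGroup_P, PSLproof.coprime_index_P,
    PSLproof.π p (PSLproof.w p), PSLproof.orderOf_w, ?_⟩
  intro g h
  set x := PSLproof.π p (PSLproof.w p) with hx
  set H := Subgroup.closure
      ({z | ∃ a ∈ PSLproof.P p, z = g⁻¹ * a * g} ∪ {h⁻¹ * x * h}) with hH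
  set H2 := H.map (MulAut.conj g).toMonoidHom with hH2
  have hPH2 : PSLproof.P p ≤ H2 := by
    intro a ha
    refine ⟨g⁻¹ * a * g, Subgroup.subset_closure (Or.inl ⟨a, ha, rfl⟩), ?_⟩
    show g * (g⁻¹ * a * g) * g⁻¹ = a
    group
  have hq2 : (MulAut.conj g) (h⁻¹ * x * h) ∈ H2 :=
    ⟨h⁻¹ * x * h, Subgroup.subset_closure (Or.inr rfl), rfl⟩
  have horder : orderOf ((MulAut.conj g) (h⁻¹ * x * h)) = 2 := by
    have e1 : orderOf ((MulAut.conj g).toMonoidHom (h⁻¹ * x * h)) = orderOf (h⁻¹ * x * h) :=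
      orderOf_injective _ (MulAut.conj g).injective _
    have e2 : h⁻¹ * x * h = (MulAut.conj h⁻¹).toMonoidHom x := by
      show _ = h⁻¹ * x * (h⁻¹)⁻¹
      rw [inv_inv]
    have e3 : orderOf ((MulAut.conj h⁻¹).toMonoidHom x) = orderOf x :=
      orderOf_injective _ (MulAut.conj h⁻¹).injective _
    rw [show ((MulAut.conj g) (h⁻¹ * x * h)) = (MulAut.conj g).toMonoidHom (h⁻¹ * x * h) from rfl,
      e1, e2, e3, hx]
    exact PSLproof.orderOf_w
  have hH2top : H2 = ⊤ := PSLproof.core_lemma hp4 h5 H2 hPH2 _ hq2 horder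
  rw [eq_top_iff]
  intro y _
  have hy2 : (MulAut.conj g).toMonoidHom y ∈ H2 := hH2top ▸ Subgroup.mem_top _
  obtain ⟨m, hm, hme⟩ := hy2
  have : m = y := (MulAut.conj g).injective hme
  rwa [← this]
end

section
/- (Zsigmondy) Let q ≥ 2 and e ≥ 2 be integers, and suppose that it is not the case that q = 2 and e = 6, and not the case that e = 2 and q + 1 is a power of 2. Then there exists a prime r such that r divides q^e − 1 but r does not divide q^f − 1 for any integer f with 1 ≤ f < e. -/
open Polynomial Finset

lemma aux_le_two_pow (n : ℕ) : n ≤ 2 ^ (n - 1) := by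
  rcases Nat.eq_zero_or_pos n with rfl | hn
  · simp
  · have := Nat.lt_two_pow_self (n := n - 1)
    omega

lemma aux_three_mul (n : ℕ) (hn : 5 ≤ n) : 3 * n + 3 ≤ 2 ^ n := by
  induction n with
  | zero => omega
  | succ k ih =>
    rcases Nat.lt_or_ge k 5 with h | h
    · have hk : k = 4 := by omega
      subst hk; norm_num
    · have := ih h
      rw [pow_succ]
      omega

lemma dvd_pow_sub_one_iff {q f r : ℕ} (hq : 1 ≤ q) [NeZero r] :
    r ∣ q ^ f - 1 ↔ (q : ZMod r) ^ f = 1 := by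
  have h1 : 1 ≤ q ^ f := Nat.one_le_pow _ _ (by omega)
  rw [← ZMod.natCast_eq_zero_iff, Nat.cast_sub h1]
  push_cast
  rw [sub_eq_zero]

lemma zsig_primitive {q e r : ℕ} (he : 1 ≤ e) (hr : r.Prime)
    (hdvd : (r : ℤ) ∣ (cyclotomic e ℤ).eval (q : ℤ)) :
    IsPrimitiveRoot (q : ZMod r) (e / r ^ e.factorization r) := by
  haveI : Fact r.Prime := ⟨hr⟩
  haveI : NeZero r := ⟨hr.pos.ne'⟩
  have hroot : (cyclotomic e (ZMod r)).IsRoot ((q : ℤ) : ZMod r) := by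
    have h0 : ((((cyclotomic e ℤ).eval (q : ℤ)) : ℤ) : ZMod r) = 0 := by
      rwa [ZMod.intCast_zmod_eq_zero_iff_dvd]
    rw [IsRoot.def, ← map_cyclotomic e (Int.castRingHom (ZMod r)), eval_map]
    exact (Polynomial.eval₂_at_apply (Int.castRingHom (ZMod r)) (q : ℤ)).trans h0
  haveI : NeZero ((e / r ^ e.factorization r : ℕ) : ZMod r) := by
    constructor
    rw [Ne, ZMod.natCast_eq_zero_iff]
    exact Nat.not_dvd_ordCompl hr (by omega)
  have heq : r ^ e.factorization r * (e / r ^ e.factorization r) = e :=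
    Nat.ordProj_mul_ordCompl_eq_self e r
  rw [← heq, isRoot_cyclotomic_prime_pow_mul_iff_of_charP] at hroot
  exact_mod_cast hroot

lemma cyclo_dvd_geom_sum {q e r : ℕ} (hq : 2 ≤ q) (hr : 2 ≤ r) (hre : r ∣ e) (he : 1 ≤ e) :
    (cyclotomic e ℤ).eval (q : ℤ) ∣ ∑ i ∈ Finset.range r, ((q : ℤ) ^ (e / r)) ^ i := by
  set d := e / r with hd
  have hdvd : d ∣ e := Nat.div_dvd_of_dvd hre
  have hdlt : d < e := Nat.div_lt_self (by omega) (by omega)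
  have hd1 : 1 ≤ d := Nat.one_le_div_iff (by omega) |>.mpr (Nat.le_of_dvd (by omega) hre)
  have hmem : d ∈ e.properDivisors := Nat.mem_properDivisors.mpr ⟨hdvd, hdlt⟩
  have h1 : ((X : ℤ[X]) ^ d - 1) * cyclotomic e ℤ ∣ X ^ e - 1 :=
    X_pow_sub_one_mul_cyclotomic_dvd_X_pow_sub_one_of_dvd ℤ hmem
  have h2 : ((q : ℤ) ^ d - 1) * (cyclotomic e ℤ).eval (q : ℤ) ∣ (q : ℤ) ^ e - 1 := by
    have := Polynomial.eval_dvd (x := (q : ℤ)) h1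
    simpa using this
  have hde : d * r = e := Nat.div_mul_cancel hre
  have hgeom : (∑ i ∈ Finset.range r, ((q : ℤ) ^ d) ^ i) * ((q : ℤ) ^ d - 1)
      = (q : ℤ) ^ e - 1 := by
    rw [geom_sum_mul, ← pow_mul, hde]
  rw [← hgeom] at h2
  have hne : ((q : ℤ) ^ d - 1) ≠ 0 := by
    have h1q : (1:ℤ) < (q:ℤ) := by exact_mod_cast hq
    have : (1:ℤ) < (q:ℤ) ^ d := one_lt_pow₀ h1q (by omega)
    omega
  rcases h2 with ⟨t, ht⟩
  refine ⟨t, mul_left_cancel₀ hne ?_⟩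
  linear_combination ht

lemma geom_sum_sq_not_dvd {r : ℕ} (hr : r.Prime) (hodd : r ≠ 2) {b : ℤ}
    (hb : (r : ℤ) ∣ b - 1) :
    ¬ ((r : ℤ) ^ 2 ∣ ∑ i ∈ Finset.range r, b ^ i) := by
  intro hdvd
  set c : ℤ := b - 1 with hc
  have key : ∀ i : ℕ, c ^ 2 ∣ b ^ i - 1 - i * c := by
    intro i
    induction i with
    | zero => simp
    | succ k ih =>
      have : b ^ (k+1) - 1 - (k+1 : ℕ) * c = b * (b ^ k - 1 - k * c) + c ^ 2 * k := by
        push_cast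
        rw [hc]
        ring
      rw [this]
      exact dvd_add (Dvd.dvd.mul_left ih b) (Dvd.dvd.mul_right (dvd_refl _) _)
  have expand : ∑ i ∈ Finset.range r, (b ^ i - 1 - (i:ℤ) * c)
      = (∑ i ∈ Finset.range r, b ^ i) - r - c * ∑ i ∈ Finset.range r, (i:ℤ) := by
    rw [Finset.sum_sub_distrib, Finset.sum_sub_distrib, Finset.sum_const, Finset.card_range,
      nsmul_eq_mul, mul_one, Finset.mul_sum]
    simp [mul_comm]
  have hsum : c ^ 2 ∣ (∑ i ∈ Finset.range r, b ^ i) - r - c * ∑ i ∈ Finset.range r, (i:ℤ) := by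
    rw [← expand]
    exact Finset.dvd_sum fun i _ => key i
  have hT : (r : ℤ) ∣ ∑ i ∈ Finset.range r, (i:ℤ) := by
    have hnat : (∑ i ∈ Finset.range r, i) * 2 = r * (r - 1) := Finset.sum_range_id_mul_two r
    have hint : (∑ i ∈ Finset.range r, (i:ℤ)) * 2 = (r : ℤ) * (r - 1) := by
      have := congrArg (fun n : ℕ => (n : ℤ)) hnat
      push_cast at this
      rw [Nat.cast_sub hr.one_le] at this
      push_cast at this
      linarith [this]
    have hrp : Prime (r : ℤ) := by rw [Int.prime_iff_natAbs_prime]; simpa using hr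
    have : (r:ℤ) ∣ (∑ i ∈ Finset.range r, (i:ℤ)) * 2 := ⟨r - 1, hint⟩
    rcases hrp.dvd_mul.mp this with h | h
    · exact h
    · exfalso
      have h2' : r ∣ 2 := by exact_mod_cast h
      have := (Nat.prime_dvd_prime_iff_eq hr Nat.prime_two).mp h2'
      exact hodd this
  have hc2 : (r:ℤ)^2 ∣ c ^ 2 := pow_dvd_pow_of_dvd hb 2
  have hcT : (r:ℤ)^2 ∣ c * ∑ i ∈ Finset.range r, (i:ℤ) := by
    rw [sq]
    exact mul_dvd_mul hb hT
  have hr2 : (r:ℤ)^2 ∣ (r:ℤ) := by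
    have h1 : (r:ℤ)^2 ∣ (∑ i ∈ Finset.range r, b ^ i) - r - c * ∑ i ∈ Finset.range r, (i:ℤ) :=
      dvd_trans hc2 hsum
    have h2 := dvd_sub (dvd_sub hdvd h1) hcT
    have heq : (∑ i ∈ Finset.range r, b ^ i)
        - ((∑ i ∈ Finset.range r, b ^ i) - r - c * ∑ i ∈ Finset.range r, (i:ℤ))
        - c * ∑ i ∈ Finset.range r, (i:ℤ) = (r:ℤ) := by ring
    rwa [heq] at h2
  have : (r^2 : ℕ) ∣ r := by exact_mod_cast hr2
  have := Nat.le_of_dvd hr.pos this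
  nlinarith [hr.two_le]

lemma two_pow_cyclotomic_sq_not_dvd {q a : ℕ} (hq : Odd q) (ha : 2 ≤ a) :
    ¬ ((2 : ℤ) ^ 2 ∣ (cyclotomic (2 ^ a) ℤ).eval (q : ℤ)) := by
  obtain ⟨k, rfl⟩ : ∃ k, a = k + 2 := ⟨a - 2, by omega⟩
  haveI : Fact (Nat.Prime 2) := ⟨Nat.prime_two⟩
  have hcyc := Polynomial.cyclotomic_prime_pow_eq_geom_sum (R := ℤ) (p := 2) (n := k + 1)
    Nat.prime_two
  rw [hcyc]
  intro hdvd
  have heval : (∑ i ∈ Finset.range 2, ((X : ℤ[X]) ^ 2 ^ (k+1)) ^ i).eval (q : ℤ)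
      = 1 + ((q:ℤ) ^ 2 ^ k) ^ 2 := by
    simp only [Finset.sum_range_succ, Finset.sum_range_zero, eval_add, eval_pow, eval_X, eval_one,
      pow_zero, pow_one, zero_add, ← pow_mul]
    rw [pow_succ]
    ring
  rw [heval] at hdvd
  have hodds : Odd ((q : ℤ) ^ 2 ^ k) := (Int.odd_coe_nat q |>.mpr hq).pow
  have := Int.sq_mod_four_eq_one_of_odd hodds
  have h4 : ((2:ℤ))^2 = 4 := by norm_num
  rw [h4] at hdvd
  omega

lemma int_cyclo_eval_cast (m : ℕ) (x : ℤ) :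
    (((cyclotomic m ℤ).eval x : ℤ) : ℝ) = (cyclotomic m ℝ).eval (x : ℝ) := by
  rw [← map_cyclotomic m (Int.castRingHom ℝ), eval_map]
  exact (Polynomial.eval₂_at_apply (Int.castRingHom ℝ) x).symm

/-- Zsigmondy's theorem: if `q ≥ 2` and `e ≥ 2`, and we are not in one of the
exceptional cases (`q = 2, e = 6`; or `e = 2` and `q + 1` a power of two), then there
is a prime dividing `q^e - 1` that divides no `q^f - 1` with `1 ≤ f < e`. -/
theorem zsigmondy (q e : ℕ) (hq : 2 ≤ q) (he : 2 ≤ e)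
    (h1 : ¬(q = 2 ∧ e = 6)) (h2 : ¬(e = 2 ∧ ∃ k : ℕ, q + 1 = 2 ^ k)) :
    ∃ r : ℕ, r.Prime ∧ r ∣ q ^ e - 1 ∧ ∀ f : ℕ, 1 ≤ f → f < e → ¬ r ∣ q ^ f - 1 := by
  rcases eq_or_lt_of_le he with he2 | he3
  · -- e = 2 : take an odd prime divisor of q + 1
    subst he2
    have hnp : ∀ k, q + 1 ≠ 2 ^ k := fun k hk => h2 ⟨rfl, k, hk⟩
    have hex : ∃ r, r.Prime ∧ r ∣ q + 1 ∧ r ≠ 2 := by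
      by_contra hall
      push_neg at hall
      exact hnp _ (Nat.eq_prime_pow_of_unique_prime_dvd (by omega)
        (fun {d} hd hdd => hall d hd hdd))
    obtain ⟨r, hr, hrd, hr2⟩ := hex
    refine ⟨r, hr, ?_, ?_⟩
    · have hfac : q ^ 2 - 1 = (q + 1) * (q - 1) := by
        have := Nat.sq_sub_sq q 1
        simpa using this
      rw [hfac]
      exact hrd.mul_right _
    · intro f hf1 hf2
      have hf : f = 1 := by omega
      subst hf
      intro hrd1
      rw [pow_one] at hrd1
      have hsub : (q + 1) - (q - 1) = 2 := by omega
      have : r ∣ 2 := by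
        have := Nat.dvd_sub hrd hrd1
        rwa [hsub] at this
      exact hr2 ((Nat.prime_dvd_prime_iff_eq hr Nat.prime_two).mp this)
  · -- e ≥ 3
    have he0 : 0 < e := by omega
    have hq1 : q ≠ 1 := by omega
    set Φz : ℤ := (cyclotomic e ℤ).eval (q : ℤ) with hΦzdef
    have hq1z : (1:ℤ) < (q:ℤ) := by exact_mod_cast hq
    have hΦpos : 0 < Φz := cyclotomic_pos' e hq1z
    set ΦN : ℕ := Φz.natAbs with hΦNdef
    have hΦNz : (ΦN : ℤ) = Φz := Int.natAbs_of_nonneg hΦpos.le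
    have hq1e : 1 ≤ q ^ e := Nat.one_le_pow _ _ (by omega)
    have hΦdvdZ : Φz ∣ (q:ℤ)^e - 1 := by
      have := Polynomial.eval_dvd (x := (q : ℤ)) (cyclotomic.dvd_X_pow_sub_one e ℤ)
      simpa using this
    have hΦdvdN : ΦN ∣ q ^ e - 1 := by
      have : (ΦN:ℤ) ∣ ((q^e - 1 : ℕ) : ℤ) := by
        rw [hΦNz, Nat.cast_sub hq1e]
        push_cast
        exact hΦdvdZ
      exact_mod_cast this
    by_contra hcon
    push_neg at hcon
    have hcast : ∀ r : ℕ, r ∣ ΦN → (r:ℤ) ∣ (cyclotomic e ℤ).eval (q : ℤ) := by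
      intro r h
      rw [← hΦzdef, ← hΦNz]
      exact_mod_cast h
    -- every prime divisor of ΦN divides e
    have hprime_e : ∀ r : ℕ, r.Prime → r ∣ ΦN → r ∣ e := by
      intro r hr hrΦ
      haveI : NeZero r := ⟨hr.pos.ne'⟩
      by_contra hre
      have hfact0 : e.factorization r = 0 := Nat.factorization_eq_zero_of_not_dvd hre
      have hprim := zsig_primitive (q := q) (by omega) hr (hcast r hrΦ)
      rw [hfact0, pow_zero, Nat.div_one] at hprim
      obtain ⟨f, hf1, hfe, hfd⟩ := hcon r hr (hrΦ.trans hΦdvdN)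
      have hone : (q : ZMod r) ^ f = 1 := (dvd_pow_sub_one_iff (by omega)).mp hfd
      have hdvd := (hprim.pow_eq_one_iff_dvd f).mp hone
      have := Nat.le_of_dvd (by omega) hdvd
      omega
    have hΦN2 : 2 ≤ ΦN := by
      have := sub_one_lt_natAbs_cyclotomic_eval (n := e) (q := q) (by omega) hq1
      omega
    set P : ℕ := ΦN.minFac with hPdef
    have hP : P.Prime := Nat.minFac_prime (by omega)
    have hPΦ : P ∣ ΦN := Nat.minFac_dvd _
    have hPe : P ∣ e := hprime_e P hP hPΦ
    have hnq : ∀ r : ℕ, r.Prime → r ∣ ΦN → ¬ r ∣ q := by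
      intro r hr hrΦ hrq
      have h1' : r ∣ q ^ e := dvd_pow hrq (by omega)
      have h2' : r ∣ q ^ e - 1 := hrΦ.trans hΦdvdN
      have h3' : r ∣ 1 := by
        have := Nat.dvd_sub h1' h2'
        have heq : q ^ e - (q ^ e - 1) = 1 := by omega
        rwa [heq] at this
      exact hr.one_lt.ne' (Nat.dvd_one.mp h3')
    have hmaxgen : ∀ r : ℕ, r.Prime → r ∣ ΦN → ∀ ℓ : ℕ, ℓ.Prime → ℓ ∣ e → ℓ ≤ r := by
      intro r hr hrΦ ℓ hℓ hℓe
      haveI : Fact r.Prime := ⟨hr⟩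
      haveI : NeZero r := ⟨hr.pos.ne'⟩
      set m := e / r ^ e.factorization r with hmdef
      have hprim := zsig_primitive (q := q) (by omega) hr (hcast r hrΦ)
      have hq0 : (q : ZMod r) ≠ 0 := by
        rw [Ne, ZMod.natCast_eq_zero_iff]
        exact hnq r hr hrΦ
      have hpow : (q : ZMod r) ^ (r - 1) = 1 := ZMod.pow_card_sub_one_eq_one hq0
      have hmr : m ∣ r - 1 := (hprim.pow_eq_one_iff_dvd (r-1)).mp hpow
      rcases eq_or_ne ℓ r with rfl | hne
      · exact le_refl _
      · have hℓm : ℓ ∣ m := by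
          have hco : Nat.Coprime ℓ (r ^ e.factorization r) :=
            Nat.Coprime.pow_right _ ((Nat.coprime_primes hℓ hr).mpr hne)
          have hdd : ℓ ∣ r ^ e.factorization r * m := by
            rw [hmdef, Nat.mul_div_cancel' (Nat.ordProj_dvd e r)]
            exact hℓe
          exact (Nat.Coprime.dvd_of_dvd_mul_left hco hdd)
        have hm0 : 0 < m := Nat.ordCompl_pos r (by omega)
        have hℓle : ℓ ≤ m := Nat.le_of_dvd hm0 hℓm
        have : m ≤ r - 1 := Nat.le_of_dvd (by have := hr.two_le; omega) hmr
        omega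
    have hPmax : ∀ ℓ : ℕ, ℓ.Prime → ℓ ∣ e → ℓ ≤ P := hmaxgen P hP hPΦ
    have huniq : ∀ r : ℕ, r.Prime → r ∣ ΦN → r = P := by
      intro r hr hrΦ
      have hA : r ≤ P := hPmax r hr (hprime_e r hr hrΦ)
      have hB : P ≤ r := hmaxgen r hr hrΦ P hP hPe
      omega
    have hΦP : ΦN = P ^ ΦN.primeFactorsList.length :=
      Nat.eq_prime_pow_of_unique_prime_dvd (by omega) (fun {d} hd hdd => huniq d hd hdd)
    -- P^2 does not divide ΦN
    have hsq : ¬ P^2 ∣ ΦN := by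
      intro hP2Φ
      have hP2Z : (P:ℤ)^2 ∣ Φz := by
        rw [← hΦNz]
        exact_mod_cast hP2Φ
      rcases eq_or_ne P 2 with hP2 | hP2
      · -- P = 2, so e is a power of two
        have he2pow : e = 2 ^ e.primeFactorsList.length :=
          Nat.eq_prime_pow_of_unique_prime_dvd (by omega) (fun {d} hd hdd => by
            have h1' := hPmax d hd hdd
            have := hd.two_le
            omega)
        set a := e.primeFactorsList.length with hadef
        have ha : 2 ≤ a := by
          by_contra hh
          push_neg at hh
          interval_cases a <;> (rw [he2pow] at he3; norm_num at he3)
        have hqodd : Odd q := by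
          rcases Nat.even_or_odd q with hev | hod
          · exfalso
            have h2d : 2 ∣ q^e - 1 := by
              rw [← hP2]
              exact hPΦ.trans hΦdvdN
            have h2q : 2 ∣ q^e := dvd_pow (even_iff_two_dvd.mp hev) (by omega)
            omega
          · exact hod
        have := two_pow_cyclotomic_sq_not_dvd hqodd ha
        apply this
        rw [← he2pow, ← hΦzdef]
        rw [hP2] at hP2Z
        exact_mod_cast hP2Z
      · -- P odd
        haveI : Fact P.Prime := ⟨hP⟩
        haveI : NeZero P := ⟨hP.pos.ne'⟩
        set d := e / P with hddef
        have hk1 : 0 < e.factorization P := hP.factorization_pos_of_dvd (by omega) hPe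
        have hmd : (e / P ^ e.factorization P) ∣ d := by
          rw [hddef, Nat.dvd_div_iff_mul_dvd hPe]
          calc P * (e / P ^ e.factorization P)
              ∣ P ^ e.factorization P * (e / P ^ e.factorization P) :=
                mul_dvd_mul_right (dvd_pow_self P (by omega)) _
            _ = e := Nat.ordProj_mul_ordCompl_eq_self e P
        have hprim := zsig_primitive (q := q) (by omega) hP (hcast P hPΦ)
        have hqd : (q : ZMod P) ^ d = 1 := by
          obtain ⟨t, ht⟩ := hmd
          rw [ht, pow_mul, hprim.pow_eq_one, one_pow]
        have hqd1 : 1 ≤ q ^ d := Nat.one_le_pow _ _ (by omega)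
        have hPd : (P:ℤ) ∣ (q:ℤ)^d - 1 := by
          have hnat : P ∣ q^d - 1 := (dvd_pow_sub_one_iff (by omega)).mpr hqd
          have : (P:ℤ) ∣ ((q^d - 1 : ℕ) : ℤ) := by exact_mod_cast hnat
          rwa [Nat.cast_sub hqd1, Nat.cast_pow] at this
        have hgeo := cyclo_dvd_geom_sum (q := q) (e := e) (r := P) hq hP.two_le hPe (by omega)
        exact geom_sum_sq_not_dvd hP hP2 hPd (dvd_trans hP2Z hgeo)
    have hlen : ΦN.primeFactorsList.length ≤ 1 := by
      by_contra hlen'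
      push_neg at hlen'
      apply hsq
      rw [hΦP]
      exact pow_dvd_pow P hlen'
    have hΦle : ΦN ≤ P := by
      calc ΦN = P ^ ΦN.primeFactorsList.length := hΦP
        _ ≤ P ^ 1 := Nat.pow_le_pow_right hP.pos hlen
        _ = P := pow_one P
    -- lower bounds: ΦN > P, contradiction
    have hPe1 : P - 1 ≤ e.totient := by
      have hd1 : P.totient ∣ e.totient := Nat.totient_dvd_of_dvd hPe
      have hd2 : P.totient = P - 1 := Nat.totient_prime hP
      have hd3 : 0 < e.totient := Nat.totient_pos.mpr (by omega)
      have := Nat.le_of_dvd hd3 hd1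
      omega
    have hφ1 : 1 ≤ e.totient := Nat.totient_pos.mpr (by omega)
    rcases (by omega : 3 ≤ q ∨ q = 2) with hq3 | hq2
    · have hb := sub_one_pow_totient_lt_natAbs_cyclotomic_eval (n := e) (q := q) (by omega) hq1
      have hchain : P ≤ (q-1) ^ e.totient :=
        calc P ≤ 2 ^ (P-1) := aux_le_two_pow P
          _ ≤ 2 ^ e.totient := Nat.pow_le_pow_right (by omega) hPe1
          _ ≤ (q-1) ^ e.totient := Nat.pow_le_pow_left (by omega) _
      omega
    · subst hq2
      by_cases hsf : ∃ ℓ : ℕ, ℓ.Prime ∧ ℓ * ℓ ∣ e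
      · -- e not squarefree
        obtain ⟨ℓ, hℓ, hℓ2⟩ := hsf
        have hℓe : ℓ ∣ e := (dvd_mul_right ℓ ℓ).trans hℓ2
        set n := e / ℓ with hndef
        have hen : n * ℓ = e := Nat.div_mul_cancel hℓe
        have hℓn : ℓ ∣ n := by
          have h' := hℓ2
          rw [← hen] at h'
          exact (Nat.mul_dvd_mul_iff_right hℓ.pos).mp h'
        have hn0 : 0 < n := Nat.div_pos (Nat.le_of_dvd (by omega) hℓe) hℓ.pos
        have hn2 : 1 < n := by
          have h' := Nat.le_of_dvd hn0 hℓn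
          have := hℓ.two_le
          omega
        have hid : (cyclotomic n ℤ).eval ((2:ℤ)^ℓ) = Φz := by
          have hexp := Polynomial.cyclotomic_expand_eq_cyclotomic hℓ hℓn (R := ℤ)
          rw [hen] at hexp
          rw [hΦzdef, ← hexp, Polynomial.expand_eval]
          norm_num
        have hPn : P ∣ n := by
          rcases eq_or_ne P ℓ with rfl | hne
          · exact hℓn
          · have hco : Nat.Coprime P ℓ := (Nat.coprime_primes hP hℓ).mpr hne
            have : P ∣ n * ℓ := by rw [hen]; exact hPe
            exact hco.dvd_of_dvd_mul_right this
        have hPn1 : P - 1 ≤ n.totient := by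
          have hd1 : P.totient ∣ n.totient := Nat.totient_dvd_of_dvd hPn
          have hd2 : P.totient = P - 1 := Nat.totient_prime hP
          have hd3 : 0 < n.totient := Nat.totient_pos.mpr (by omega)
          have := Nat.le_of_dvd hd3 hd1
          omega
        have h4ℓ : 4 ≤ 2 ^ ℓ := by
          calc (4:ℕ) = 2 ^ 2 := by norm_num
            _ ≤ 2 ^ ℓ := Nat.pow_le_pow_right (by norm_num) hℓ.two_le
        have hb := sub_one_pow_totient_lt_natAbs_cyclotomic_eval (n := n) (q := 2^ℓ)
          hn2 (by omega)
        have hbn : (2^ℓ - 1) ^ n.totient < ΦN := by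
          have hcast2 : ((2^ℓ : ℕ) : ℤ) = (2:ℤ)^ℓ := by push_cast; ring
          rw [hcast2, hid] at hb
          exact hb
        have hchain : P ≤ (2^ℓ - 1) ^ n.totient :=
          calc P ≤ 2 ^ (P-1) := aux_le_two_pow P
            _ ≤ (2^ℓ - 1) ^ (P-1) := Nat.pow_le_pow_left (by omega) _
            _ ≤ (2^ℓ - 1) ^ n.totient := Nat.pow_le_pow_right (by omega) hPn1
        omega
      · -- e squarefree
        push_neg at hsf
        set m := e / P with hmdef
        have hem : m * P = e := Nat.div_mul_cancel hPe
        have hme : m ∣ e := ⟨P, hem.symm⟩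
        have hPm : ¬ P ∣ m := by
          intro h
          exact hsf P hP (by rw [← hem]; exact mul_dvd_mul h dvd_rfl)
        have hm0 : 0 < m := by
          rcases Nat.eq_zero_or_pos m with h | h
          · rw [h] at hem; simp at hem; omega
          · exact h
        have hΦz2 : (cyclotomic e ℤ).eval (2:ℤ) = Φz := by
          rw [hΦzdef]; norm_num
        rcases (by omega : m = 1 ∨ m = 2 ∨ 3 ≤ m) with hm1 | hm2 | hm3
        · -- e = P
          have hEP : e = P := by rw [← hem, hm1, one_mul]
          haveI : Fact P.Prime := ⟨hP⟩
          have hΦeval : Φz = 2^P - 1 := by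
            rw [← hΦz2, hEP, cyclotomic_prime ℤ P, eval_geom_sum]
            have hg := geom_sum_mul (2:ℤ) P
            have h21 : (2:ℤ) - 1 = 1 := by norm_num
            rw [h21, mul_one] at hg
            exact hg
          have hN : ΦN + 1 = 2^P := by
            have hc : ((ΦN + 1 : ℕ):ℤ) = ((2^P : ℕ):ℤ) := by
              push_cast
              rw [hΦNz, hΦeval]
              ring
            exact_mod_cast hc
          have hP3 : 3 ≤ P := by omega
          have h2p : 2*P ≤ 2^P := by
            have h' := aux_le_two_pow P
            calc 2*P ≤ 2*2^(P-1) := by omega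
              _ = 2^(P-1+1) := by rw [pow_succ]; ring
              _ = 2^P := by congr 1; omega
          omega
        · -- e = 2P
          have hE2P : 2 * P = e := by rw [← hem, hm2]
          have hP2 : P ≠ 2 := by
            intro h
            exact hPm (by rw [hm2, h])
          have hP3 : P ≠ 3 := by
            intro h
            exact h1 ⟨rfl, by omega⟩
          have hP4 : P ≠ 4 := fun h => by rw [h] at hP; norm_num at hP
          have hP5 : 5 ≤ P := by
            have := hP.two_le
            omega
          have hPn2 : ¬ P ∣ 2 := by
            intro h
            have := Nat.le_of_dvd (by norm_num) h
            omega
          have hexp := cyclotomic_expand_eq_cyclotomic_mul (p := P) (n := 2) hP hPn2 ℤ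
          have hval := congrArg (eval (2:ℤ)) hexp
          rw [expand_eval, eval_mul, hE2P, cyclotomic_two, eval_add, eval_X, eval_one, hΦz2]
            at hval
          -- hval : (X+1).eval (2^P) = Φz * (2 + 1)
          rw [eval_add, eval_X, eval_one] at hval
          have hnat : 2^P + 1 = ΦN * 3 := by
            have hc : ((2^P + 1 : ℕ):ℤ) = ((ΦN * 3 : ℕ):ℤ) := by
              push_cast
              rw [hΦNz]
              linarith [hval]
            exact_mod_cast hc
          have := aux_three_mul P hP5
          omega
        · -- e = mP, m ≥ 3
          have hmodd : ∃ ℓ : ℕ, ℓ.Prime ∧ ℓ ∣ m ∧ ℓ ≠ 2 := by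
            by_contra hall
            push_neg at hall
            have hmp : m = 2 ^ m.primeFactorsList.length :=
              Nat.eq_prime_pow_of_unique_prime_dvd (by omega) (fun {d} hd hdd => hall d hd hdd)
            have h4 : ¬ 2*2 ∣ m := fun h4' => hsf 2 Nat.prime_two (h4'.trans hme)
            have hlen2 : m.primeFactorsList.length ≤ 1 := by
              by_contra hl
              push_neg at hl
              apply h4
              have hdd : 2^2 ∣ 2 ^ m.primeFactorsList.length := pow_dvd_pow 2 hl
              rw [← hmp] at hdd
              have h22 : (2:ℕ)^2 = 2*2 := by norm_num
              rwa [h22] at hdd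
            have hm2' : m ≤ 2 := by
              calc m = 2 ^ m.primeFactorsList.length := hmp
                _ ≤ 2^1 := Nat.pow_le_pow_right (by norm_num) hlen2
                _ = 2 := pow_one 2
            omega
          obtain ⟨ℓ, hℓp, hℓm, hℓ2⟩ := hmodd
          have hℓe : ℓ ∣ e := hℓm.trans hme
          have hℓP : ℓ ≤ P := hPmax ℓ hℓp hℓe
          have hℓne : ℓ ≠ P := fun h => hPm (h ▸ hℓm)
          have hℓ3 : 3 ≤ ℓ := by have := hℓp.two_le; omega
          have hP4 : P ≠ 4 := fun h => by rw [h] at hP; norm_num at hP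
          have hP5 : 5 ≤ P := by omega
          haveI : Fact P.Prime := ⟨hP⟩
          have hexp := cyclotomic_expand_eq_cyclotomic_mul (p := P) (n := m) hP hPm ℤ
          have hval := congrArg (eval (2:ℤ)) hexp
          rw [expand_eval, eval_mul, hem, hΦz2] at hval
          -- hval : (cyclotomic m ℤ).eval ((2:ℤ)^P) = Φz * (cyclotomic m ℤ).eval 2
          -- move to ℝ
          have castA : (((cyclotomic m ℤ).eval ((2:ℤ)^P) : ℤ) : ℝ)
              = (cyclotomic m ℝ).eval ((2:ℝ)^P) := by
            have h' := int_cyclo_eval_cast m ((2:ℤ)^P)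
            rw [h']
            norm_num
          have castB : (((cyclotomic m ℤ).eval ((2:ℤ)) : ℤ) : ℝ)
              = (cyclotomic m ℝ).eval (2:ℝ) := by
            have h' := int_cyclo_eval_cast m (2:ℤ)
            rw [h']
            norm_num
          set A : ℝ := (cyclotomic m ℝ).eval ((2:ℝ)^P) with hA
          set B : ℝ := (cyclotomic m ℝ).eval (2:ℝ) with hB
          set F : ℝ := (Φz : ℝ) with hF
          have hABF : A = F * B := by
            rw [← castA, ← castB, hval]
            push_cast
            ring
          have hφm : 1 ≤ m.totient := Nat.totient_pos.mpr (by omega)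
          have hB3 : B < 3 ^ m.totient := by
            have h' := cyclotomic_eval_lt_add_one_pow_totient (n := m) (q := (2:ℝ))
              hm3 (by norm_num)
            norm_num at h'
            exact h'
          have hB0 : (0:ℝ) < B := cyclotomic_pos' m (by norm_num)
          have hA1 : ((2:ℝ)^P - 1) ^ m.totient < A :=
            sub_one_pow_totient_lt_cyclotomic_eval (by omega : 2 ≤ m)
              (one_lt_pow₀ (by norm_num : (1:ℝ) < 2) (by omega))
          have hFP : F ≤ P := by
            rw [hF, ← hΦNz]
            exact_mod_cast hΦle
          have hF0 : (0:ℝ) ≤ F := by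
            rw [hF]
            exact_mod_cast hΦpos.le
          have hP0 : (0:ℝ) < P := by
            have := hP.pos
            exact_mod_cast this
          have h3P : (3 * P : ℝ) ≤ (2:ℝ)^P - 1 := by
            have hn' := aux_three_mul P hP5
            have : ((3 * P + 3 : ℕ) : ℝ) ≤ ((2^P : ℕ) : ℝ) := by exact_mod_cast hn'
            push_cast at this
            linarith
          have hstep1 : (P:ℝ) * 3 ^ m.totient ≤ (3 * P : ℝ) ^ m.totient := by
            rw [mul_pow]
            have h1' : (P:ℝ) ≤ (P:ℝ) ^ m.totient :=
              le_self_pow₀ (by exact_mod_cast hP.one_le) (by omega)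
            have h2' : (0:ℝ) ≤ (P:ℝ) := hP0.le
            nlinarith [pow_pos (show (0:ℝ) < 3 by norm_num) m.totient,
              pow_nonneg h2' m.totient]
          have hstep2 : ((3:ℝ) * P) ^ m.totient ≤ ((2:ℝ)^P - 1) ^ m.totient := by
            apply pow_le_pow_left₀ (by positivity) h3P
          have hstep3 : A ≤ P * B := by
            rw [hABF]
            exact mul_le_mul_of_nonneg_right hFP hB0.le
          have hstep4 : (P:ℝ) * B < P * 3 ^ m.totient :=
            mul_lt_mul_of_pos_left hB3 hP0
          linarith
end

section
/- Let F be a finite field with q elements, let n ≥ 1, and let r be a prime dividing q^n − 1 such that r does not divide q^j − 1 for any integer j with 1 ≤ j < n. If g is an invertible F-linear automorphism of the vector space F^n (equivalently, an element of GL(n, F)) whose order equals r, then the only F-subspaces W of F^n satisfying g(w) ∈ W for all w ∈ W are the zero subspace and F^n itself; that is, g acts irreducibly. -/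
/-- Conjugation of automorphism groups by a linear equivalence. -/
def autConjZsig {R M N : Type*} [CommRing R] [AddCommGroup M] [Module R M]
    [AddCommGroup N] [Module R N] (e : M ≃ₗ[R] N) : (M ≃ₗ[R] M) ≃* (N ≃ₗ[R] N) where
  toFun f := (e.symm.trans f).trans e
  invFun f := (e.trans f).trans e.symm
  left_inv f := by ext x; simp [LinearEquiv.trans_apply]
  right_inv f := by ext x; simp [LinearEquiv.trans_apply]
  map_mul' a b := by
    ext x
    show e (a (b (e.symm x))) = e (a (e.symm (e (b (e.symm x)))))
    simp

lemma key_dvd_zsig {F : Type*} [Field F] [Fintype F] {V : Type*} [AddCommGroup V]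
    [Module F V] [Module.Finite F V] {r : ℕ} (hr : r.Prime)
    (hrq : ¬ r ∣ Fintype.card F) (e : V ≃ₗ[F] V) (he : orderOf e = r) :
    ∃ j, 1 ≤ j ∧ j ≤ Module.finrank F V ∧ r ∣ Fintype.card F ^ j - 1 := by
  classical
  set q := Fintype.card F with hq
  set d := Module.finrank F V with hd
  let b : Module.Basis (Fin d) F V := Module.finBasis F V
  let e' : (Fin d → F) ≃ₗ[F] (Fin d → F) := autConjZsig b.equivFun e
  have he' : orderOf e' = r := by
    rw [← he]
    exact (autConjZsig b.equivFun).orderOf_eq e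
  let u : LinearMap.GeneralLinearGroup F (Fin d → F) :=
    (LinearMap.GeneralLinearGroup.generalLinearEquiv F (Fin d → F)).symm e'
  let A : GL (Fin d) F := (Matrix.GeneralLinearGroup.toLin).symm u
  have hA : orderOf A = r := by
    have h1 : orderOf u = r := by
      rw [← he']
      exact (LinearMap.GeneralLinearGroup.generalLinearEquiv F (Fin d → F)).symm.orderOf_eq e'
    rw [← h1]
    exact (Matrix.GeneralLinearGroup.toLin).symm.orderOf_eq u
  have hdvd : r ∣ Nat.card (GL (Fin d) F) := hA ▸ orderOf_dvd_natCard A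
  rw [Matrix.card_GL_field] at hdvd
  obtain ⟨i, -, hi⟩ := hr.prime.exists_mem_finset_dvd hdvd
  have hile : (i : ℕ) ≤ d := le_of_lt i.isLt
  have hfact : q ^ d - q ^ (i : ℕ) = q ^ (i : ℕ) * (q ^ (d - (i : ℕ)) - 1) := by
    rw [Nat.mul_sub, mul_one, ← pow_add, Nat.add_sub_cancel' hile]
  rw [hfact] at hi
  rcases hr.prime.dvd_mul.mp hi with h | h
  · exact absurd (hr.dvd_of_dvd_pow h) hrq
  · exact ⟨d - (i : ℕ), by omega, by omega, h⟩

set_option maxHeartbeats 800000 in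
/-- An element of order a Zsigmondy prime for `(q, n)` in `GL_n(𝔽_q)` acts irreducibly
on the natural module. -/
theorem zsigmondy_prime_order_element_acts_irreducibly
    (F : Type*) [Field F] [Fintype F] (q n r : ℕ) (hq : Fintype.card F = q)
    (hn : 1 ≤ n) (hr : r.Prime) (hdvd : r ∣ q ^ n - 1)
    (hzsig : ∀ j : ℕ, 1 ≤ j → j < n → ¬ r ∣ q ^ j - 1)
    (g : (Fin n → F) ≃ₗ[F] (Fin n → F)) (hg : orderOf g = r)
    (W : Submodule F (Fin n → F)) (hW : ∀ w ∈ W, g w ∈ W) :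
    W = ⊥ ∨ W = ⊤ := by
  classical
  subst hq
  set q := Fintype.card F with hqdef
  by_contra hcon
  push_neg at hcon
  obtain ⟨hbot, htop⟩ := hcon
  have hq1 : 1 ≤ q := Fintype.card_pos
  have hrq : ¬ r ∣ q := by
    intro h
    have h1 : r ∣ q ^ n := dvd_pow h (by omega)
    have h2 : q ^ n - (q ^ n - 1) = 1 := Nat.sub_sub_self (Nat.one_le_pow _ _ hq1)
    have h3 : r ∣ 1 := h2 ▸ Nat.dvd_sub h1 hdvd
    exact hr.one_lt.ne' (Nat.dvd_one.mp h3)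
  have hgr : g ^ r = 1 := hg ▸ pow_orderOf_eq_one g
  have hfr : Module.finrank F (Fin n → F) = n := by
    simp [Module.finrank_fintype_fun_eq_card]
  have hWlt : Module.finrank F W < n := by
    have h := Submodule.finrank_lt (K := F) (V := Fin n → F) htop
    rwa [hfr] at h
  have hWpos : 0 < Module.finrank F W := by
    exact Nat.pos_of_ne_zero fun h => hbot (Submodule.finrank_eq_zero.mp h)
  -- restriction of g to W
  let fW : W →ₗ[F] W := LinearMap.restrict (g : (Fin n → F) →ₗ[F] (Fin n → F)) hW
  have hinjW : Function.Injective fW := by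
    intro x y hxy
    have h := congrArg Subtype.val hxy
    simp only [fW, LinearMap.restrict_apply] at h
    exact Subtype.ext (g.injective h)
  have hbijW : Function.Bijective fW := (Finite.injective_iff_bijective).mp hinjW
  let gW : W ≃ₗ[F] W := LinearEquiv.ofBijective fW hbijW
  have hgWapp : ∀ x : W, (gW x : Fin n → F) = g x := fun x => rfl
  have hpowW : ∀ (k : ℕ) (x : W), ((gW ^ k) x : Fin n → F) = (g ^ k) (x : Fin n → F) := by
    intro k
    induction k with
    | zero => intro x; simp
    | succ k ih =>
      intro x
      calc ((gW ^ (k + 1)) x : Fin n → F) = ((gW ^ k) (gW x) : Fin n → F) := by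
            rw [pow_succ]; rfl
        _ = (g ^ k) ((gW x : Fin n → F)) := ih _
        _ = (g ^ k) (g (x : Fin n → F)) := by rw [hgWapp]
        _ = (g ^ (k + 1)) (x : Fin n → F) := by rw [pow_succ]; rfl
  have hgWr : gW ^ r = 1 := by
    apply LinearEquiv.ext
    intro x
    apply Subtype.ext
    show ((gW ^ r) x : Fin n → F) = (x : Fin n → F)
    rw [hpowW, hgr]
    rfl
  have horW : orderOf gW ∣ r := orderOf_dvd_iff_pow_eq_one.mpr hgWr
  rcases hr.eq_one_or_self_of_dvd _ horW with h1 | hrr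
  · -- g acts trivially on W
    have hfix : ∀ w ∈ W, g w = w := by
      intro w hw
      have hone : gW = 1 := orderOf_eq_one_iff.mp h1
      have := congrArg Subtype.val (congrArg (fun (e : W ≃ₗ[F] W) => e ⟨w, hw⟩) hone)
      simpa [hgWapp] using this
    -- induced map on the quotient
    have hW' : W ≤ W.comap (g : (Fin n → F) →ₗ[F] (Fin n → F)) := fun x hx => hW x hx
    let fQ := Submodule.mapQ W W (g : (Fin n → F) →ₗ[F] (Fin n → F)) hW'
    have hsurjQ : Function.Surjective fQ := by
      intro y
      obtain ⟨x, rfl⟩ := Submodule.Quotient.mk_surjective W y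
      refine ⟨Submodule.Quotient.mk (g.symm x), ?_⟩
      rw [Submodule.mapQ_apply]
      simp
    have hbijQ : Function.Bijective fQ := (Finite.surjective_iff_bijective).mp hsurjQ
    let gQ : ((Fin n → F) ⧸ W) ≃ₗ[F] ((Fin n → F) ⧸ W) := LinearEquiv.ofBijective fQ hbijQ
    have hgQapp : ∀ x, gQ (Submodule.Quotient.mk x) = Submodule.Quotient.mk (g x) := by
      intro x
      show fQ (Submodule.Quotient.mk x) = _
      rfl
    have hpowQ : ∀ (k : ℕ) (x : Fin n → F),
        (gQ ^ k) (Submodule.Quotient.mk x) = Submodule.Quotient.mk ((g ^ k) x) := by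
      intro k
      induction k with
      | zero => intro x; simp
      | succ k ih =>
        intro x
        calc (gQ ^ (k + 1)) (Submodule.Quotient.mk x)
            = (gQ ^ k) (gQ (Submodule.Quotient.mk x)) := by rw [pow_succ]; rfl
          _ = (gQ ^ k) (Submodule.Quotient.mk (g x)) := by rw [hgQapp]
          _ = Submodule.Quotient.mk ((g ^ k) (g x)) := ih _
          _ = Submodule.Quotient.mk ((g ^ (k + 1)) x) := by rw [pow_succ]; rfl
    have hgQr : gQ ^ r = 1 := by
      apply LinearEquiv.ext
      intro y
      obtain ⟨x, rfl⟩ := Submodule.Quotient.mk_surjective W y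
      rw [hpowQ, hgr]
      rfl
    have horQ : orderOf gQ ∣ r := orderOf_dvd_iff_pow_eq_one.mpr hgQr
    rcases hr.eq_one_or_self_of_dvd _ horQ with h2 | hrr2
    · -- unipotent case
      have hsub : ∀ x, g x - x ∈ W := by
        intro x
        have hone : gQ = 1 := orderOf_eq_one_iff.mp h2
        have h3 : gQ (Submodule.Quotient.mk x) = Submodule.Quotient.mk x := by rw [hone]; rfl
        rw [hgQapp] at h3
        exact (Submodule.Quotient.eq W).mp h3
      have hpow : ∀ (k : ℕ) (x : Fin n → F), (g ^ k) x = x + k • (g x - x) := by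
        intro k
        induction k with
        | zero => intro x; simp
        | succ k ih =>
          intro x
          have : (g ^ (k + 1)) x = g ((g ^ k) x) := by rw [pow_succ']; rfl
          rw [this, ih, map_add, map_nsmul, hfix _ (hsub x), succ_nsmul]
          abel
      have hgne : g ≠ 1 := by
        intro h
        rw [h, orderOf_one] at hg
        have := hr.one_lt
        omega
      obtain ⟨x₀, hx₀⟩ : ∃ x, g x ≠ x := by
        by_contra hall
        push_neg at hall
        exact hgne (LinearEquiv.ext fun x => hall x)
      have hv : g x₀ - x₀ ≠ 0 := sub_ne_zero.mpr hx₀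
      have hrv : r • (g x₀ - x₀) = 0 := by
        have := hpow r x₀
        rw [hgr] at this
        have h0 : x₀ = x₀ + r • (g x₀ - x₀) := this
        exact (add_eq_left.mp h0.symm)
      obtain ⟨i, hi⟩ : ∃ i, (g x₀ - x₀) i ≠ 0 := Function.ne_iff.mp hv
      have hri : (r : F) * (g x₀ - x₀) i = 0 := by
        have := congrFun hrv i
        simpa [nsmul_eq_mul] using this
      have hcast : (r : F) = 0 := by
        rcases mul_eq_zero.mp hri with h | h
        · exact h
        · exact absurd h hi
      have hcp : CharP F (ringChar F) := ringChar.charP F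
      have hp : (ringChar F).Prime := CharP.char_is_prime F (ringChar F)
      have hpr : ringChar F ∣ r := (CharP.cast_eq_zero_iff F (ringChar F) r).mp hcast
      have hreq : ringChar F = r := ((hr.eq_one_or_self_of_dvd _ hpr).resolve_left hp.one_lt.ne')
      have hqz : ((q : ℕ) : F) = 0 := by
        rw [hqdef]
        exact FiniteField.cast_card_eq_zero F
      have : r ∣ q := hreq ▸ (CharP.cast_eq_zero_iff F (ringChar F) q).mp hqz
      exact hrq this
    · -- order r on the quotient
      obtain ⟨j, hj1, hj2, hj3⟩ := key_dvd_zsig hr hrq gQ hrr2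
      have hQrank : Module.finrank F ((Fin n → F) ⧸ W) + Module.finrank F W = n := by
        rw [Submodule.finrank_quotient_add_finrank, hfr]
      exact hzsig j hj1 (by omega) hj3
  · -- order r on W
    obtain ⟨j, hj1, hj2, hj3⟩ := key_dvd_zsig hr hrq gW hrr
    exact hzsig j hj1 (by omega) hj3
end

section
/- Let F be a finite field with q elements, let n ≥ 1 and 0 ≤ k ≤ n, and let W be a k-dimensional F-subspace of F^n. Then the stabilizer P_k = { g ∈ GL(n, F) : g(w) ∈ W for all w ∈ W } of W in GL(n, F) has cardinality q^(n(n−1)/2) · (∏_{j=1}^{k} (q^j − 1)) · (∏_{j=1}^{n−k} (q^j − 1)). -/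
open Matrix

section Auxiliary

lemma cardGL_aux (F : Type*) [Field F] [Fintype F] (d : ℕ) :
    Nat.card (GL (Fin d) F) =
      (Fintype.card F) ^ (d * (d-1) / 2) * ∏ j ∈ Finset.Icc 1 d, ((Fintype.card F) ^ j - 1) := by
  set q := Fintype.card F
  have hq : 1 ≤ q := Fintype.card_pos
  rw [Matrix.card_GL_field]
  show ∏ i : Fin d, (q ^ d - q ^ (i:ℕ)) = _
  rw [Fin.prod_univ_eq_prod_range (fun i => q ^ d - q ^ i)]
  have h1 : ∀ i ∈ Finset.range d, q ^ d - q ^ i = q ^ i * (q ^ (d - i) - 1) := by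
    intro i hi
    simp only [Finset.mem_range] at hi
    rw [Nat.mul_sub, mul_one, ← pow_add]
    congr 2
    omega
  rw [Finset.prod_congr rfl h1, Finset.prod_mul_distrib, Finset.prod_pow_eq_pow_sum,
    Finset.sum_range_id]
  congr 1
  rw [show ∏ j ∈ Finset.Icc 1 d, (q ^ j - 1) = ∏ j ∈ Finset.range d, (q ^ (j+1) - 1) by
    rw [← Finset.Ico_add_one_right_eq_Icc, Finset.prod_Ico_eq_prod_range]; simp [add_comm]]
  rw [← Finset.prod_range_reflect (fun j => (q ^ (j+1) - 1)) d]
  apply Finset.prod_congr rfl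
  intro i hi
  simp only [Finset.mem_range] at hi
  congr 2
  omega

/-- The coordinate subspace of vectors supported on the first `k` coordinates. -/
def coordSub (F : Type*) [Field F] (n k : ℕ) : Submodule F (Fin n → F) where
  carrier := {v | ∀ i : Fin n, k ≤ (i : ℕ) → v i = 0}
  add_mem' := by intro a b ha hb i hi; simp [ha i hi, hb i hi]
  zero_mem' := by intro i _; rfl
  smul_mem' := by intro c a ha i hi; simp [ha i hi]

noncomputable def coordSubEquiv (F : Type*) [Field F] {n k : ℕ} (hk : k ≤ n) :
    coordSub F n k ≃ₗ[F] (Fin k → F) where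
  toFun v := fun i => v.1 (Fin.castLE hk i)
  map_add' v w := rfl
  map_smul' c v := rfl
  invFun u := ⟨fun i => if h : (i : ℕ) < k then u ⟨i, h⟩ else 0,
    fun i hi => dif_neg (not_lt.2 hi)⟩
  left_inv v := by
    ext i
    by_cases h : (i : ℕ) < k
    · simp only [dif_pos h]
      congr 1
    · exact (dif_neg h).trans (v.2 i (not_lt.1 h)).symm
  right_inv u := by
    ext i
    show (if h : ((Fin.castLE hk i : Fin n) : ℕ) < k then u ⟨(Fin.castLE hk i : Fin n), h⟩ else 0)
      = u i
    rw [dif_pos (by simp : ((Fin.castLE hk i : Fin n) : ℕ) < k)]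
    congr 1

lemma finrank_coordSub (F : Type*) [Field F] {n k : ℕ} (hk : k ≤ n) :
    Module.finrank F (coordSub F n k) = k := by
  rw [(coordSubEquiv F hk).finrank_eq, Module.finrank_fintype_fun_eq_card, Fintype.card_fin]

variable {F : Type*} [Field F] {n k : ℕ}

/-- Reindexing equivalence. -/
def bE (hk : k ≤ n) : Fin k ⊕ Fin (n - k) ≃ Fin n :=
  finSumFinEquiv.trans (finCongr (Nat.add_sub_cancel' hk))

lemma bE_inl (hk : k ≤ n) (a : Fin k) : ((bE hk (Sum.inl a) : Fin n) : ℕ) = a := by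
  simp [bE]

lemma bE_inr (hk : k ≤ n) (b : Fin (n - k)) : ((bE hk (Sum.inr b) : Fin n) : ℕ) = k + b := by
  simp [bE]

lemma bE_symm_lt (hk : k ≤ n) {j : Fin n} (hj : (j : ℕ) < k) :
    ∃ a : Fin k, (bE hk).symm j = Sum.inl a := by
  rcases h : (bE hk).symm j with a | b
  · exact ⟨a, rfl⟩
  · exfalso
    have := bE_inr hk b
    rw [← h, Equiv.apply_symm_apply] at this
    omega

lemma bE_symm_ge (hk : k ≤ n) {i : Fin n} (hi : k ≤ (i : ℕ)) :
    ∃ b : Fin (n - k), (bE hk).symm i = Sum.inr b := by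
  rcases h : (bE hk).symm i with a | b
  · exfalso
    have := bE_inl hk a
    rw [← h, Equiv.apply_symm_apply] at this
    have := a.isLt
    omega
  · exact ⟨b, rfl⟩

/-- Map from block data to the stabilizer of the coordinate subspace. -/
noncomputable def blockMap (hk : k ≤ n)
    (x : GL (Fin k) F × GL (Fin (n - k)) F × Matrix (Fin k) (Fin (n - k)) F) :
    {g : GL (Fin n) F // ∀ i j : Fin n, (j : ℕ) < k → k ≤ (i : ℕ) →
        (g : Matrix (Fin n) (Fin n) F) i j = 0} := by
  obtain ⟨A, D, B⟩ := x
  refine ⟨⟨(fromBlocks (A : Matrix (Fin k) (Fin k) F) B 0 D).submatrix (bE hk).symm (bE hk).symm,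
    (fromBlocks (↑A⁻¹ : Matrix (Fin k) (Fin k) F)
      (-((↑A⁻¹ : Matrix (Fin k) (Fin k) F) * B * (↑D⁻¹ : Matrix (Fin (n-k)) (Fin (n-k)) F))) 0
      (↑D⁻¹ : Matrix (Fin (n-k)) (Fin (n-k)) F)).submatrix (bE hk).symm (bE hk).symm, ?_, ?_⟩, ?_⟩
  · rw [submatrix_mul_equiv, fromBlocks_multiply]
    have h1 : (A : Matrix (Fin k) (Fin k) F) * (↑A⁻¹ : Matrix (Fin k) (Fin k) F) = 1 := by
      rw [← Matrix.GeneralLinearGroup.coe_mul, mul_inv_cancel]; rfl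
    have h2 : (D : Matrix (Fin (n-k)) (Fin (n-k)) F)
        * (↑D⁻¹ : Matrix (Fin (n-k)) (Fin (n-k)) F) = 1 := by
      rw [← Matrix.GeneralLinearGroup.coe_mul, mul_inv_cancel]; rfl
    have h3 : (A : Matrix (Fin k) (Fin k) F)
          * -((↑A⁻¹ : Matrix (Fin k) (Fin k) F) * B * (↑D⁻¹ : Matrix (Fin (n-k)) (Fin (n-k)) F))
        + B * (↑D⁻¹ : Matrix (Fin (n-k)) (Fin (n-k)) F) = 0 := by
      rw [Matrix.mul_neg, ← Matrix.mul_assoc, ← Matrix.mul_assoc, h1, Matrix.one_mul,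
        neg_add_cancel]
    simp only [h1, h2, h3, Matrix.mul_zero, Matrix.zero_mul, add_zero, zero_add, mul_one]
    rw [fromBlocks_one, submatrix_one_equiv]
  · rw [submatrix_mul_equiv, fromBlocks_multiply]
    have h1 : (↑A⁻¹ : Matrix (Fin k) (Fin k) F) * (A : Matrix (Fin k) (Fin k) F) = 1 := by
      rw [← Matrix.GeneralLinearGroup.coe_mul, inv_mul_cancel]; rfl
    have h2 : (↑D⁻¹ : Matrix (Fin (n-k)) (Fin (n-k)) F)
        * (D : Matrix (Fin (n-k)) (Fin (n-k)) F) = 1 := by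
      rw [← Matrix.GeneralLinearGroup.coe_mul, inv_mul_cancel]; rfl
    have h3 : (↑A⁻¹ : Matrix (Fin k) (Fin k) F) * B
        + -((↑A⁻¹ : Matrix (Fin k) (Fin k) F) * B * (↑D⁻¹ : Matrix (Fin (n-k)) (Fin (n-k)) F))
          * (D : Matrix (Fin (n-k)) (Fin (n-k)) F) = 0 := by
      rw [Matrix.neg_mul, Matrix.mul_assoc ((↑A⁻¹ : Matrix (Fin k) (Fin k) F) * B), h2,
        Matrix.mul_one, add_neg_cancel]
    simp only [h1, h2, h3, Matrix.mul_zero, Matrix.zero_mul, add_zero, zero_add, mul_one]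
    rw [fromBlocks_one, submatrix_one_equiv]
  · intro i j hj hi
    obtain ⟨b, hb⟩ := bE_symm_ge hk hi
    obtain ⟨a, ha⟩ := bE_symm_lt hk hj
    show (fromBlocks (A : Matrix (Fin k) (Fin k) F) B 0 D) ((bE hk).symm i) ((bE hk).symm j) = 0
    rw [hb, ha]
    rfl

lemma blockMap_bijective [Fintype F] (hk : k ≤ n) :
    Function.Bijective (blockMap (F := F) hk) := by
  constructor
  · rintro ⟨A, D, B⟩ ⟨A', D', B'⟩ h
    have hval : (fromBlocks (A : Matrix (Fin k) (Fin k) F) B 0 D).submatrix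
          (bE hk).symm (bE hk).symm
        = (fromBlocks (A' : Matrix (Fin k) (Fin k) F) B' 0
            (D' : Matrix (Fin (n-k)) (Fin (n-k)) F)).submatrix (bE hk).symm (bE hk).symm := by
      exact congrArg (fun z => ((z.1 : GL (Fin n) F) : Matrix (Fin n) (Fin n) F)) h
    have hfb : fromBlocks (A : Matrix (Fin k) (Fin k) F) B 0 D
        = fromBlocks (A' : Matrix (Fin k) (Fin k) F) B' 0
            (D' : Matrix (Fin (n-k)) (Fin (n-k)) F) := by
      have := congrArg (fun M : Matrix (Fin n) (Fin n) F => M.submatrix (bE hk) (bE hk)) hval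
      simpa [submatrix_submatrix, Function.comp] using this
    refine Prod.ext ?_ (Prod.ext ?_ ?_)
    · exact Units.ext (by ext i j; exact congrFun (congrFun hfb (Sum.inl i)) (Sum.inl j))
    · exact Units.ext (by ext i j; exact congrFun (congrFun hfb (Sum.inr i)) (Sum.inr j))
    · ext i j; exact congrFun (congrFun hfb (Sum.inl i)) (Sum.inr j)
  · rintro ⟨g, hg⟩
    set P : Matrix (Fin k ⊕ Fin (n - k)) (Fin k ⊕ Fin (n - k)) F :=
      (g : Matrix (Fin n) (Fin n) F).submatrix (bE hk) (bE hk) with hP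
    have hP21 : P.toBlocks₂₁ = 0 := by
      ext i j
      exact hg _ _ (by simpa using (bE_inl hk j ▸ j.isLt)) (by rw [bE_inr hk]; omega)
    have hdet : P.det = (g : Matrix (Fin n) (Fin n) F).det := det_submatrix_equiv_self _ _
    have hPblocks : P = fromBlocks P.toBlocks₁₁ P.toBlocks₁₂ 0 P.toBlocks₂₂ := by
      rw [← hP21, fromBlocks_toBlocks]
    have hdet2 : P.det = P.toBlocks₁₁.det * P.toBlocks₂₂.det := by
      rw [hPblocks]; exact det_fromBlocks_zero₂₁ _ _ _
    have hgdet : (g : Matrix (Fin n) (Fin n) F).det ≠ 0 := by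
      exact ((Matrix.isUnit_iff_isUnit_det _).mp g.isUnit).ne_zero
    have hA : P.toBlocks₁₁.det ≠ 0 := fun h => hgdet (by rw [← hdet, hdet2, h, zero_mul])
    have hD : P.toBlocks₂₂.det ≠ 0 := fun h => hgdet (by rw [← hdet, hdet2, h, mul_zero])
    refine ⟨⟨Matrix.GeneralLinearGroup.mkOfDetNeZero _ hA,
      Matrix.GeneralLinearGroup.mkOfDetNeZero _ hD, P.toBlocks₁₂⟩, ?_⟩
    apply Subtype.ext
    apply Units.ext
    show (fromBlocks P.toBlocks₁₁ P.toBlocks₁₂ 0 P.toBlocks₂₂).submatrix (bE hk).symm (bE hk).symm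
      = (g : Matrix (Fin n) (Fin n) F)
    rw [← hPblocks, hP]
    ext i j
    simp [submatrix_submatrix]

lemma stab_coord_iff (g : Matrix (Fin n) (Fin n) F) :
    (∀ w ∈ coordSub F n k, g.mulVec w ∈ coordSub F n k) ↔
      ∀ i j : Fin n, (j : ℕ) < k → k ≤ (i : ℕ) → g i j = 0 := by
  constructor
  · intro H i j hj hi
    have hmem : Pi.single j (1 : F) ∈ coordSub F n k := by
      intro i' hi'
      exact Pi.single_eq_of_ne (fun h => by omega) 1
    have := H _ hmem i hi
    rw [mulVec_single] at this
    simpa using this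
  · intro H w hw i hi
    show (g.mulVec w) i = 0
    rw [mulVec, dotProduct]
    apply Finset.sum_eq_zero
    intro j _
    by_cases hj : (j : ℕ) < k
    · rw [H i j hj hi, zero_mul]
    · rw [hw j (not_lt.1 hj), mul_zero]

lemma card_stab_coord [Fintype F] (hk : k ≤ n) :
    Nat.card {g : GL (Fin n) F // ∀ w ∈ coordSub F n k,
        (g : Matrix (Fin n) (Fin n) F).mulVec w ∈ coordSub F n k}
      = Nat.card (GL (Fin k) F) * Nat.card (GL (Fin (n - k)) F)
          * (Fintype.card F) ^ (k * (n - k)) := by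
  rw [Nat.card_congr (Equiv.subtypeEquivRight
    (q := fun g : GL (Fin n) F => ∀ i j : Fin n, (j : ℕ) < k → k ≤ (i : ℕ) →
      (g : Matrix (Fin n) (Fin n) F) i j = 0)
    (fun g => stab_coord_iff (g : Matrix (Fin n) (Fin n) F)))]
  rw [← Nat.card_eq_of_bijective _ (blockMap_bijective (F := F) hk)]
  rw [Nat.card_prod, Nat.card_prod, mul_assoc]
  congr 2
  rw [Nat.card_eq_fintype_card]
  show Fintype.card (Fin k → Fin (n-k) → F) = _
  rw [Fintype.card_fun]
  rw [Fintype.card_fun]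
  simp [← pow_mul, mul_comm]

/-- An automorphism of `Fin n → F` carrying `coordSub F n k` to `W`. -/
lemma exists_equiv_map (W : Submodule F (Fin n → F)) (hW : Module.finrank F W = k)
    (hk : Module.finrank F (coordSub F n k) = k) :
    ∃ e : (Fin n → F) ≃ₗ[F] (Fin n → F), ∀ v, v ∈ coordSub F n k ↔ e v ∈ W := by
  obtain ⟨W', hc⟩ := Submodule.exists_isCompl W
  obtain ⟨W0', hc0⟩ := Submodule.exists_isCompl (coordSub F n k)
  have h1 : Module.finrank F (coordSub F n k) = Module.finrank F W := by rw [hk, hW]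
  have h2 : Module.finrank F W0' = Module.finrank F W' := by
    have a1 := Submodule.finrank_add_eq_of_isCompl hc
    have a2 := Submodule.finrank_add_eq_of_isCompl hc0
    omega
  let eW : (coordSub F n k) ≃ₗ[F] W := LinearEquiv.ofFinrankEq _ _ h1
  let eW' : W0' ≃ₗ[F] W' := LinearEquiv.ofFinrankEq _ _ h2
  let e : (Fin n → F) ≃ₗ[F] (Fin n → F) :=
    (Submodule.prodEquivOfIsCompl _ _ hc0).symm.trans
      ((eW.prodCongr eW').trans (Submodule.prodEquivOfIsCompl _ _ hc))
  refine ⟨e, fun v => ⟨fun hv => ?_, fun hv => ?_⟩⟩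
  · have : e v = ↑(eW ⟨v, hv⟩) + ↑(eW' 0) := by
      simp only [e, LinearEquiv.trans_apply]
      rw [show ((coordSub F n k).prodEquivOfIsCompl W0' hc0).symm v
          = ((⟨v, hv⟩ : coordSub F n k), (0 : W0')) from
        Submodule.prodEquivOfIsCompl_symm_apply_left _ _ hc0 ⟨v, hv⟩]
      rfl
    rw [this, LinearEquiv.map_zero]
    simpa using (eW ⟨v, hv⟩).2
  · set p := (Submodule.prodEquivOfIsCompl _ _ hc0).symm v with hp
    have hv' : e v = (eW p.1 : Fin n → F) + (eW' p.2 : Fin n → F) := by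
      simp only [e, LinearEquiv.trans_apply, ← hp]
      rfl
    have h2' : (eW' p.2 : Fin n → F) ∈ W := by
      have := W.sub_mem hv (eW p.1).2
      rw [hv'] at this
      simpa using this
    have hbot : (eW' p.2 : Fin n → F) ∈ W ⊓ W' := ⟨h2', (eW' p.2).2⟩
    rw [hc.inf_eq_bot, Submodule.mem_bot] at hbot
    have hz : p.2 = 0 := by
      apply eW'.injective
      rw [LinearEquiv.map_zero]
      exact Subtype.ext hbot
    have : v = (p.1 : Fin n → F) := by
      have := (Submodule.prodEquivOfIsCompl _ _ hc0).apply_symm_apply v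
      rw [← hp, Submodule.coe_prodEquivOfIsCompl', hz] at this
      simpa using this.symm
    rw [this]
    exact p.1.2

end Auxiliary

/-- The order of the stabilizer in `GL_n(𝔽_q)` of a `k`-dimensional subspace of `𝔽_q^n`
is `q^(n(n-1)/2) · ∏_{j=1}^k (q^j - 1) · ∏_{j=1}^{n-k} (q^j - 1)`. -/
theorem card_parabolic_subgroup
    (F : Type*) [Field F] [Fintype F] (q n k : ℕ) (hq : Fintype.card F = q)
    (hn : 1 ≤ n) (hk : k ≤ n)
    (W : Submodule F (Fin n → F)) (hW : Module.finrank F W = k) :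
    Nat.card {g : Matrix.GeneralLinearGroup (Fin n) F //
        ∀ w ∈ W, (g : Matrix (Fin n) (Fin n) F).mulVec w ∈ W} =
      q ^ (n * (n - 1) / 2) * (∏ j ∈ Finset.Icc 1 k, (q ^ j - 1)) *
        (∏ j ∈ Finset.Icc 1 (n - k), (q ^ j - 1)) := by
  obtain ⟨e, he⟩ := exists_equiv_map W hW (finrank_coordSub F hk)
  -- package `e` as an element of `GL (Fin n) F`
  let g₀ : GL (Fin n) F :=
    ⟨LinearMap.toMatrix' (e : (Fin n → F) →ₗ[F] (Fin n → F)),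
     LinearMap.toMatrix' (e.symm : (Fin n → F) →ₗ[F] (Fin n → F)),
     by rw [← LinearMap.toMatrix'_comp]; simp,
     by rw [← LinearMap.toMatrix'_comp]; simp⟩
  have hg₀ : ∀ v, (g₀ : Matrix (Fin n) (Fin n) F).mulVec v = e v := by
    intro v
    show (LinearMap.toMatrix' (e : (Fin n → F) →ₗ[F] (Fin n → F))).mulVec v = e v
    rw [← Matrix.toLin'_apply, Matrix.toLin'_toMatrix']
    rfl
  have hg₀' : ∀ v, ((g₀⁻¹ : GL (Fin n) F) : Matrix (Fin n) (Fin n) F).mulVec v = e.symm v := by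
    intro v
    show (LinearMap.toMatrix' (e.symm : (Fin n → F) →ₗ[F] (Fin n → F))).mulVec v = e.symm v
    rw [← Matrix.toLin'_apply, Matrix.toLin'_toMatrix']
    rfl
  have key : ∀ g : GL (Fin n) F,
      (∀ w ∈ W, (g : Matrix (Fin n) (Fin n) F).mulVec w ∈ W) ↔
      (∀ w ∈ coordSub F n k,
        ((g₀⁻¹ * g * g₀ : GL (Fin n) F) : Matrix (Fin n) (Fin n) F).mulVec w ∈ coordSub F n k) := by
    intro g
    have hmv : ∀ w, ((g₀⁻¹ * g * g₀ : GL (Fin n) F) : Matrix (Fin n) (Fin n) F).mulVec w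
        = e.symm ((g : Matrix (Fin n) (Fin n) F).mulVec (e w)) := by
      intro w
      rw [Units.val_mul, Units.val_mul, ← Matrix.mulVec_mulVec, ← Matrix.mulVec_mulVec,
        hg₀, hg₀']
    constructor
    · intro H w hw
      rw [hmv]
      have h1 : (g : Matrix (Fin n) (Fin n) F).mulVec (e w) ∈ W := H _ ((he w).1 hw)
      have := (he (e.symm ((g : Matrix (Fin n) (Fin n) F).mulVec (e w)))).2
      apply this
      rwa [e.apply_symm_apply]
    · intro H w hw
      have h1 : e.symm w ∈ coordSub F n k := by
        apply (he _).2
        rwa [e.apply_symm_apply]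
      have h2 := H _ h1
      rw [hmv, e.apply_symm_apply] at h2
      have := (he _).1 h2
      rwa [e.apply_symm_apply] at this
  have hcard : Nat.card {g : Matrix.GeneralLinearGroup (Fin n) F //
        ∀ w ∈ W, (g : Matrix (Fin n) (Fin n) F).mulVec w ∈ W}
      = Nat.card {g : GL (Fin n) F // ∀ w ∈ coordSub F n k,
          (g : Matrix (Fin n) (Fin n) F).mulVec w ∈ coordSub F n k} := by
    apply Nat.card_congr
    refine ⟨fun g => ⟨g₀⁻¹ * g.1 * g₀, (key g.1).1 g.2⟩,
      fun h => ⟨g₀ * h.1 * g₀⁻¹, ?_⟩, fun g => ?_, fun h => ?_⟩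
    · apply (key _).2
      have : g₀⁻¹ * (g₀ * h.1 * g₀⁻¹) * g₀ = h.1 := by group
      rw [this]
      exact h.2
    · apply Subtype.ext
      show g₀ * (g₀⁻¹ * g.1 * g₀) * g₀⁻¹ = g.1
      group
    · apply Subtype.ext
      show g₀⁻¹ * (g₀ * h.1 * g₀⁻¹) * g₀ = h.1
      group
  have hexp : k * (k-1) / 2 + (n-k) * ((n-k)-1) / 2 + k * (n-k) = n * (n-1) / 2 := by
    have h3 : ∑ i ∈ Finset.range (k + (n-k)), i
        = ∑ i ∈ Finset.range k, i + ∑ i ∈ Finset.range (n-k), (k + i) :=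
      Finset.sum_range_add _ k (n-k)
    rw [Finset.sum_add_distrib, Finset.sum_const, Finset.card_range, smul_eq_mul] at h3
    have g1 := Finset.sum_range_id k
    have g2 := Finset.sum_range_id (n-k)
    have g3 := Finset.sum_range_id (k + (n-k))
    have hkn : k + (n - k) = n := by omega
    rw [hkn] at g3 h3
    rw [g3, g1, g2, Nat.mul_comm (n-k) k] at h3
    omega
  rw [hcard, card_stab_coord hk, cardGL_aux, cardGL_aux, hq, ← hexp, pow_add, pow_add]
  ring
end

section
/- Let G be a finite group and let N be an abelian minimal normal subgroup of G. Let H and K be proper subgroups of G with HN = G and KN = G, and let x, y ∈ G. If the right coset Hx is contained in the right coset Ky (as subsets of G), then Hx = Ky. In other words, the cosets of proper subgroups H with HN = G form an antichain under inclusion. -/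
open scoped Pointwise

/-- If `N` is an abelian minimal normal subgroup of a finite group `G`, the cosets of
proper subgroups `H` with `HN = G` form an antichain under inclusion. -/
theorem abelian_minimal_normal_cosets_antichain
    (G : Type*) [Group G] [Finite G] (N : Subgroup G) [N.Normal]
    (hbot : N ≠ ⊥)
    (hmin : ∀ M : Subgroup G, M.Normal → M ≤ N → M = ⊥ ∨ M = N)
    (hab : ∀ a ∈ N, ∀ b ∈ N, a * b = b * a)
    (H K : Subgroup G) (hH : H ≠ ⊤) (hK : K ≠ ⊤)
    (hHN : H ⊔ N = ⊤) (hKN : K ⊔ N = ⊤) (x y : G)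
    (hsub : (H : Set G) * {x} ⊆ (K : Set G) * {y}) :
    (H : Set G) * {x} = (K : Set G) * {y} := by
  -- x ∈ K * {y}
  have hx : x ∈ (K : Set G) * {y} := by
    apply hsub
    exact ⟨1, H.one_mem, x, rfl, one_mul x⟩
  obtain ⟨k, hk, y', hy', hxy⟩ := hx
  rcases hy' with rfl
  -- H ≤ K
  have hHK : H ≤ K := by
    intro h hh
    obtain ⟨k', hk', y'', hy'', hkk⟩ := hsub ⟨h, hh, x, rfl, rfl⟩
    rcases hy'' with rfl
    have hxy2 : k * y'' = x := hxy
    have hkk2 : k' * y'' = h * (k * y'') := by rw [hxy2]; exact hkk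
    have : h = k' * k⁻¹ := by
      have := mul_right_cancel (hkk2.trans (mul_assoc h k y'').symm)
      rw [this]; group
    rw [this]
    exact K.mul_mem hk' (K.inv_mem hk)
  -- K ⊓ N is normal in G
  have hKNnorm : (K ⊓ N).Normal := by
    constructor
    intro a ha g
    have hg : g ∈ (H : Set G) * (N : Set G) := by
      rw [← Subgroup.mul_normal, hHN]; trivial
    obtain ⟨h, hh, n, hn, rfl⟩ := hg
    have hnan : n * a * n⁻¹ = a := by
      rw [hab n hn a ha.2]; group
    have : h * n * a * (h * n)⁻¹ = h * a * h⁻¹ := by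
      rw [mul_inv_rev, show h * n * a * (n⁻¹ * h⁻¹) = h * (n * a * n⁻¹) * h⁻¹ by group, hnan]
    rw [this]
    exact ⟨K.mul_mem (K.mul_mem (hHK hh) ha.1) (K.inv_mem (hHK hh)),
      ‹N.Normal›.conj_mem a ha.2 h⟩
  -- K ⊓ N = ⊥
  have hKNbot : K ⊓ N = ⊥ := by
    rcases hmin (K ⊓ N) hKNnorm inf_le_right with h | h
    · exact h
    · exfalso
      apply hK
      have hNK : N ≤ K := h ▸ inf_le_left
      rw [← hKN, sup_eq_left.mpr hNK]
  have hHNbot : H ⊓ N = ⊥ := le_bot_iff.mp (hKNbot ▸ inf_le_inf_right N hHK)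
  -- complements ⇒ cardinalities
  have cH : Nat.card H * Nat.card N = Nat.card G :=
    (Subgroup.isComplement'_of_disjoint_and_mul_eq_univ (disjoint_iff.mpr hHNbot)
      (by rw [← Subgroup.mul_normal, hHN]; rfl)).card_mul
  have cK : Nat.card K * Nat.card N = Nat.card G :=
    (Subgroup.isComplement'_of_disjoint_and_mul_eq_univ (disjoint_iff.mpr hKNbot)
      (by rw [← Subgroup.mul_normal, hKN]; rfl)).card_mul
  have hNpos : 0 < Nat.card N := Nat.card_pos
  have hcard : Nat.card K = Nat.card H :=
    Nat.eq_of_mul_eq_mul_right hNpos (cK.trans cH.symm)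
  have hHKeq : H = K := Subgroup.eq_of_le_of_card_ge hHK (le_of_eq hcard)
  -- conclude
  apply Set.Subset.antisymm hsub
  rintro g ⟨k', hk', y'', hy'', rfl⟩
  rcases hy'' with rfl
  refine ⟨k' * k⁻¹, ?_, x, rfl, ?_⟩
  · rw [hHKeq]; exact K.mul_mem hk' (K.inv_mem hk)
  · rw [← hxy]; group
end

section
/- Let G be a finite group and let N be an abelian minimal normal subgroup of G. Then the number of subsets of G of the form Hx, where H ranges over proper subgroups of G with HN = G and x ranges over G, is divisible by the cardinality of N. -/
open scoped Pointwise

/-- If a group `K` acts freely on a finite type `α`, then `|K| ∣ |α|`. -/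
lemma aux_card_dvd_of_free {K α : Type*} [Group K] [Finite α]
    (f : K → α → α) (h1 : ∀ a, f 1 a = a)
    (hmul : ∀ k l a, f (k * l) a = f k (f l a))
    (hfree : ∀ (k : K) (a : α), f k a = a → k = 1) :
    Nat.card K ∣ Nat.card α := by
  classical
  rcases isEmpty_or_nonempty α with hα | hα
  · simp [Nat.card_of_isEmpty]
  letI : MulAction K α :=
    { smul := f
      one_smul := h1
      mul_smul := hmul }
  have hsmul : ∀ (k : K) (a : α), k • a = f k a := fun _ _ => rfl
  have hfree' : ∀ (k : K) (a : α), k • a = a → k = 1 := fun k a h =>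
    hfree k a ((hsmul k a) ▸ h)
  have e2 : ∀ b : α, K ≃ MulAction.orbit K b := by
    intro b
    refine Equiv.ofBijective (fun k => ⟨k • b, MulAction.mem_orbit b k⟩) ⟨?_, ?_⟩
    · intro k l hkl
      have h' : k • b = l • b := congrArg Subtype.val hkl
      have : (l⁻¹ * k) • b = b := by rw [mul_smul, h', ← mul_smul, inv_mul_cancel, one_smul]
      have := hfree' _ _ this
      rwa [inv_mul_eq_one, eq_comm] at this
    · rintro ⟨y, k, rfl⟩
      exact ⟨k, rfl⟩
  let e : α ≃ (MulAction.orbitRel.Quotient K α) × K :=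
    (MulAction.selfEquivSigmaOrbits K α).trans <|
      ((Equiv.sigmaCongrRight fun (ω : MulAction.orbitRel.Quotient K α) => (e2 ω.out).symm).trans
        (Equiv.sigmaEquivProd _ K))
  rw [Nat.card_eq_of_bijective e e.bijective, Nat.card_prod]
  exact dvd_mul_left _ _

/-- If `N` is an abelian minimal normal subgroup of a finite group `G`, then the number
of cosets `Hx` of proper subgroups `H` of `G` with `HN = G` is divisible by `|N|`. -/
theorem abelian_minimal_normal_card_cosets_dvd
    (G : Type*) [Group G] [Finite G] (N : Subgroup G) [N.Normal]
    (hbot : N ≠ ⊥)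
    (hmin : ∀ M : Subgroup G, M.Normal → M ≤ N → M = ⊥ ∨ M = N)
    (hab : ∀ a ∈ N, ∀ b ∈ N, a * b = b * a) :
    Nat.card N ∣
      Nat.card {S : Set G | ∃ (H : Subgroup G) (x : G),
        H ≠ ⊤ ∧ H ⊔ N = ⊤ ∧ S = (H : Set G) * {x}} := by
  classical
  -- Key: any such `H` intersects `N` trivially.
  have key : ∀ H : Subgroup G, H ≠ ⊤ → H ⊔ N = ⊤ → H ⊓ N = ⊥ := by
    intro H hH hHN
    have hnorm : (H ⊓ N).Normal := by
      constructor
      intro k hk g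
      have hg : g ∈ ((H : Set G) * (N : Set G)) := by
        rw [← Subgroup.mul_normal, hHN]; trivial
      obtain ⟨h, hh, n, hn, rfl⟩ := hg
      have hk1 : k ∈ H := hk.1
      have hk2 : k ∈ N := hk.2
      have hcomm : n * k * n⁻¹ = k := by
        rw [hab n hn k hk2]; group
      have hre : (h * n) * k * (h * n)⁻¹ = h * k * h⁻¹ := by
        rw [mul_inv_rev, show h * n * k * (n⁻¹ * h⁻¹) = h * (n * k * n⁻¹) * h⁻¹ by group,
          hcomm]
      rw [hre]
      exact ⟨H.mul_mem (H.mul_mem hh hk1) (H.inv_mem hh),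
        Subgroup.Normal.conj_mem ‹N.Normal› k hk2 h⟩
    rcases hmin (H ⊓ N) hnorm inf_le_right with h | h
    · exact h
    · have hNH : N ≤ H := h ▸ inf_le_left
      rw [sup_eq_left.mpr hNH] at hHN
      exact absurd hHN hH
  refine aux_card_dvd_of_free
    (α := {S : Set G | ∃ (H : Subgroup G) (x : G),
        H ≠ ⊤ ∧ H ⊔ N = ⊤ ∧ S = (H : Set G) * {x}})
    (fun n S => ⟨S.1 * {(n : G)⁻¹}, ?_⟩) ?_ ?_ ?_
  · obtain ⟨H, x, hH, hHN, hS⟩ := S.2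
    exact ⟨H, x * (n : G)⁻¹, hH, hHN, by
      rw [hS, mul_assoc, Set.singleton_mul_singleton]⟩
  · intro a
    apply Subtype.ext
    show a.1 * {((1 : N) : G)⁻¹} = a.1
    simp
  · intro k l a
    apply Subtype.ext
    show a.1 * {((k * l : N) : G)⁻¹} = a.1 * {(l : G)⁻¹} * {(k : G)⁻¹}
    rw [mul_assoc, Set.singleton_mul_singleton]
    norm_num [mul_inv_rev]
  · intro n S hnS
    obtain ⟨H, x, hH, hHN, hS⟩ := S.2
    have heq : (H : Set G) * {x} * {(n : G)⁻¹} = (H : Set G) * {x} := by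
      have h' := congrArg Subtype.val hnS
      simp only at h'
      rw [hS] at h'
      exact h'
    have hmem : x * (n : G)⁻¹ ∈ (H : Set G) * {x} := by
      rw [← heq]
      exact Set.mul_mem_mul (⟨1, H.one_mem, x, rfl, one_mul x⟩ : x ∈ (H : Set G) * {x}) rfl
    obtain ⟨h, hh, y, hy, hprod⟩ := hmem
    rw [Set.mem_singleton_iff] at hy
    subst hy
    -- hprod : h * y = y * n⁻¹
    have hval : h = y * (n : G)⁻¹ * y⁻¹ := by
      rw [← hprod]; group
    have hhN : h ∈ N := by
      rw [hval]
      exact Subgroup.Normal.conj_mem ‹N.Normal› _ (N.inv_mem n.2) y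
    have hmemb : h ∈ H ⊓ N := ⟨hh, hhN⟩
    rw [key H hH hHN, Subgroup.mem_bot] at hmemb
    rw [hmemb] at hprod
    have hprod' : y = y * (n : G)⁻¹ := by simpa using hprod
    have hn1 : (1 : G) = (n : G)⁻¹ :=
      mul_left_cancel (a := y) (by rw [mul_one]; exact hprod')
    exact Subtype.ext (by simpa using congrArg Inv.inv hn1.symm)
end

section
/- Let G be a group, let N be a normal subgroup of G, and let C, P be subgroups of G contained in N such that for every g ∈ G the subgroup generated by C ∪ g⁻¹Pg equals N. Then for every proper subgroup H of G with HN = G and every x ∈ G, there exist c ∈ C and k ∈ P such that the set {c⁻¹hxk : h ∈ H} is not equal to the right coset Hx = {hx : h ∈ H}; that is, no coset of such a subgroup H is fixed by the action of C × P. -/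
/-- If `C, P ≤ N ⊴ G` satisfy `⟨C, P^g⟩ = N` for all `g ∈ G`, then no coset of a
proper subgroup `H` of `G` with `HN = G` is fixed by the action of `C × P`. -/
theorem no_fixed_coset
    (G : Type*) [Group G] (N : Subgroup G) [N.Normal] (C P : Subgroup G)
    (hC : C ≤ N) (hP : P ≤ N)
    (hgen : ∀ g : G,
      Subgroup.closure ((C : Set G) ∪ {x : G | ∃ a ∈ P, x = g⁻¹ * a * g}) = N)
    (H : Subgroup G) (hH : H ≠ ⊤) (hHN : H ⊔ N = ⊤) (x : G) :
    ∃ c ∈ C, ∃ k ∈ P,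
      {y : G | ∃ h ∈ H, y = c⁻¹ * h * x * k} ≠ {y : G | ∃ h ∈ H, y = h * x} := by
  by_contra hcon
  push_neg at hcon
  -- From the fixedness, extract membership facts
  have key : ∀ c ∈ C, ∀ k ∈ P, c⁻¹ * x * k * x⁻¹ ∈ H := by
    intro c hc k hk
    have heq := hcon c hc k hk
    have hmem : (c⁻¹ * x * k) ∈ {y : G | ∃ h ∈ H, y = c⁻¹ * h * x * k} :=
      ⟨1, H.one_mem, by group⟩
    rw [heq] at hmem
    obtain ⟨h, hh, hyx⟩ := hmem
    have : c⁻¹ * x * k * x⁻¹ = h := by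
      rw [hyx]; group
    rw [this]; exact hh
  have hCH : ∀ c ∈ C, c ∈ H := by
    intro c hc
    have := key c hc 1 P.one_mem
    simpa using H.inv_mem this
  have hPH : ∀ k ∈ P, x * k * x⁻¹ ∈ H := by
    intro k hk
    have := key 1 C.one_mem k hk
    simpa using this
  have hNH : N ≤ H := by
    rw [← hgen x⁻¹]
    apply (Subgroup.closure_le H).mpr
    rintro y (hy | ⟨a, ha, rfl⟩)
    · exact hCH y hy
    · simpa using hPH a ha
  have : H = ⊤ := by
    rw [← hHN, sup_eq_left.mpr hNH]
  exact hH this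
end

section
/- Let p be a prime, let G be a finite p-group acting on a finite vertex set V, and let Δ be a finite abstract simplicial complex on V (a finite set of nonempty finite subsets of V closed under passing to nonempty subsets) such that g • σ ∈ Δ for every g ∈ G and σ ∈ Δ. Let Δ^G be the set of faces σ ∈ Δ with g • σ = σ for all g ∈ G. Then the reduced Euler characteristics satisfy χ̃(Δ) ≡ χ̃(Δ^G) (mod p), where χ̃(Δ) = −1 + Σ_{σ ∈ Δ} (−1)^(|σ|−1). -/
open scoped Pointwise

/-- Smith theory, claim (3): if a finite `p`-group `G` acts on a finite simplicial
complex `Δ`, then `χ̃(Δ) ≡ χ̃(Δ^G) (mod p)`. -/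
theorem reduced_euler_char_fixed_subcomplex_modEq
    (p : ℕ) (hp : p.Prime) (G V : Type*) [Group G] [Fintype G] [Fintype V]
    [DecidableEq V] [MulAction G V]
    (hpgroup : ∃ n : ℕ, Fintype.card G = p ^ n)
    (Δ : Finset (Finset V))
    (hne : ∀ σ ∈ Δ, σ.Nonempty)
    (hdown : ∀ σ ∈ Δ, ∀ τ : Finset V, τ ⊆ σ → τ.Nonempty → τ ∈ Δ)
    (hact : ∀ g : G, ∀ σ ∈ Δ, g • σ ∈ Δ) :
    (-1 + ∑ σ ∈ Δ, (-1 : ℤ) ^ (σ.card - 1)) ≡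
      (-1 + ∑ σ ∈ Δ.filter (fun σ => ∀ g : G, g • σ = σ), (-1 : ℤ) ^ (σ.card - 1))
        [ZMOD (p : ℤ)] := by
  classical
  haveI : NeZero p := ⟨hp.pos.ne'⟩
  obtain ⟨n, hcardG⟩ := hpgroup
  rw [← ZMod.intCast_eq_intCast_iff _ _ p]
  push_cast
  congr 1
  set T := Δ.filter (fun σ => ¬ ∀ g : G, g • σ = σ) with hT
  have hsplit := Finset.sum_filter_add_sum_filter_not Δ (fun σ => ∀ g : G, g • σ = σ)
    (fun σ => ((-1 : ZMod p)) ^ (σ.card - 1))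
  have key : (∑ σ ∈ T, ((-1 : ZMod p)) ^ (σ.card - 1)) = 0 := by
    have hTclosed : ∀ g : G, ∀ σ ∈ T, g • σ ∈ T := by
      intro g σ hσ
      simp only [hT, Finset.mem_filter] at hσ ⊢
      refine ⟨hact g σ hσ.1, fun hfix => hσ.2 ?_⟩
      intro h
      have h2 := hfix (g * h * g⁻¹)
      rw [smul_smul] at h2
      have h3 : (g * h * g⁻¹) * g = g * h := by group
      rw [h3, mul_smul] at h2
      exact smul_left_cancel g h2
    set orb : Finset V → Finset (Finset V) :=
      fun σ => (Finset.univ : Finset G).image (· • σ) with horbdef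
    have hmemorb : ∀ σ : Finset V, σ ∈ orb σ := fun σ =>
      Finset.mem_image.2 ⟨1, Finset.mem_univ 1, one_smul _ _⟩
    have orbmap : ∀ σ ∈ T, orb σ ∈ T.image orb := fun σ h => Finset.mem_image_of_mem _ h
    rw [← Finset.sum_fiberwise_of_maps_to orbmap (fun σ => ((-1 : ZMod p)) ^ (σ.card - 1))]
    apply Finset.sum_eq_zero
    intro O hO
    obtain ⟨τ, hτT, rfl⟩ := Finset.mem_image.1 hO
    have horbsmul : ∀ g : G, orb (g • τ) = orb τ := by
      intro g
      ext ρ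
      simp only [horbdef, Finset.mem_image, Finset.mem_univ, true_and]
      constructor
      · rintro ⟨h', rfl⟩; exact ⟨h' * g, mul_smul _ _ _⟩
      · rintro ⟨h', rfl⟩
        exact ⟨h' * g⁻¹, by rw [mul_smul, inv_smul_smul]⟩
    have hfiber : T.filter (fun σ => orb σ = orb τ) = orb τ := by
      ext σ
      constructor
      · intro h
        obtain ⟨h1, h2⟩ := Finset.mem_filter.1 h
        rw [← h2]; exact hmemorb σ
      · intro h
        obtain ⟨g, -, rfl⟩ := Finset.mem_image.1 h
        exact Finset.mem_filter.2 ⟨hTclosed g τ hτT, horbsmul g⟩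
    rw [hfiber]
    have hconst : ∀ σ ∈ orb τ, ((-1 : ZMod p)) ^ (σ.card - 1) = ((-1 : ZMod p)) ^ (τ.card - 1) := by
      intro σ hσ
      obtain ⟨g, -, rfl⟩ := Finset.mem_image.1 hσ
      rw [Finset.card_smul_finset]
    rw [Finset.sum_congr rfl hconst, Finset.sum_const]
    have hdvd : p ∣ (orb τ).card := by
      have hset : MulAction.orbit G τ = ↑(orb τ) := by
        ext ρ
        simp [MulAction.mem_orbit_iff, horbdef, eq_comm]
      have hcardeq : Fintype.card (MulAction.orbit G τ) = (orb τ).card := by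
        rw [← Nat.card_eq_fintype_card, hset]
        simp [Nat.card_coe_set_eq, Set.ncard_coe_finset]
      have hos := MulAction.card_orbit_mul_card_stabilizer_eq_card_group G τ
      have hdvdpow : (orb τ).card ∣ p ^ n := by
        rw [← hcardG, ← hos, ← hcardeq]
        exact Dvd.intro _ rfl
      obtain ⟨k, hkn, hk⟩ := (Nat.dvd_prime_pow hp).1 hdvdpow
      have hk0 : k ≠ 0 := by
        intro h0
        rw [h0, pow_zero] at hk
        obtain ⟨a, ha⟩ := Finset.card_eq_one.1 hk
        have hτa : τ = a := by
          have := hmemorb τ; rw [ha] at this; exact Finset.mem_singleton.1 this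
        have hfix : ∀ g : G, g • τ = τ := by
          intro g
          have : g • τ ∈ orb τ := Finset.mem_image.2 ⟨g, Finset.mem_univ g, rfl⟩
          rw [ha] at this
          rw [Finset.mem_singleton.1 this, hτa]
        exact (Finset.mem_filter.1 hτT).2 hfix
      rw [hk]
      exact dvd_pow_self p hk0
    rw [nsmul_eq_mul, (ZMod.natCast_eq_zero_iff _ _).2 hdvd, zero_mul]
  rw [← hsplit, key, add_zero]
end
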